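/- arXiv:1105.2404 — 4 statements merged into one kernel-verified Lean document; each statement's English description precedes it below -/
import Mathlib

section
/- Let 2 ≤ k ≤ m < n be integers. Then the Harary graph H_{m,n} is a ⌊m/2⌋-Hamiltonian-like decomposable graph, and γ_{×k,t}((H_{m,n})_I) = nk + 1 if k and n are both odd, and γ_{×k,t}((H_{m,n})_I) = nk otherwise. -/
open SimpleGraph

/-- The inflated graph `G_I` of a graph `G`: its vertices are the darts (oriented edges) of
`G`; the darts with first coordinate `x` form the clique `X_x` (of size `deg x`), and each
edge `xy` of `G` gives the "blue" edge between the dart `(x,y)` and its reverse `(y,x)`;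
these blue edges form a perfect matching.  Equivalently, `inflation G` is the line graph of
the subdivision of `G`. -/
def inflation {V : Type*} (G : SimpleGraph V) : SimpleGraph G.Dart :=
  SimpleGraph.fromRel (fun d₁ d₂ => d₁.toProd.1 = d₂.toProd.1 ∨ d₁.toProd = d₂.toProd.swap)

/-- `S` is a `k`-tuple total dominating set of `H`: every vertex has at least `k`
neighbours in `S`. -/
def IsKTDS {W : Type*} (H : SimpleGraph W) (k : ℕ) (S : Set W) : Prop :=
  ∀ v : W, k ≤ (S ∩ H.neighborSet v).ncard

/-- The `k`-tuple total domination number of `H`: the minimum cardinality of a `k`-tuple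
total dominating set. -/
noncomputable def ktdn {W : Type*} (H : SimpleGraph W) (k : ℕ) : ℕ :=
  sInf {n | ∃ S : Set W, IsKTDS H k S ∧ S.ncard = n}

/-- `H` is a 2-factor of `G`: a spanning 2-regular subgraph of `G`, i.e. a vertex-disjoint
union of cycles covering all vertices. -/
def IsTwoFactor {V : Type*} (G H : SimpleGraph V) : Prop :=
  H ≤ G ∧ ∀ v : V, (H.neighborSet v).ncard = 2

/-- `G` is a `k`-Hamiltonian-like decomposable graph (kHLD-graph): `G` contains `k`
pairwise edge-disjoint 2-factors. -/
def IsKHLD {V : Type*} (G : SimpleGraph V) (k : ℕ) : Prop :=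
  ∃ F : Fin k → SimpleGraph V, (∀ i, IsTwoFactor G (F i)) ∧
    ∀ i j, i ≠ j → Disjoint (F i) (F j)

/-- `M` is a perfect matching of `G`, viewed as a 1-regular spanning subgraph. -/
def IsPerfectMatchingGraph {V : Type*} (G M : SimpleGraph V) : Prop :=
  M ≤ G ∧ ∀ v : V, (M.neighborSet v).ncard = 1

/-- `M` is a matching of `G`: a subgraph of maximum degree at most 1. -/
def IsMatchingGraph {V : Type*} (G M : SimpleGraph V) : Prop :=
  M ≤ G ∧ ∀ v : V, (M.neighborSet v).ncard ≤ 1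

/-- `G` is a kHLPM-graph: `G` contains `k` pairwise edge-disjoint 2-factors together with
a perfect matching edge-disjoint from each of these 2-factors. -/
def IsKHLPM {V : Type*} (G : SimpleGraph V) (k : ℕ) : Prop :=
  ∃ (F : Fin k → SimpleGraph V) (M : SimpleGraph V),
    (∀ i, IsTwoFactor G (F i)) ∧ (∀ i j, i ≠ j → Disjoint (F i) (F j)) ∧
    IsPerfectMatchingGraph G M ∧ ∀ i, Disjoint M (F i)

/-- `G` is a kHLMM-graph: `G` contains `k` pairwise edge-disjoint 2-factors together with
a matching of size `⌊n/2⌋` edge-disjoint from each of these 2-factors. -/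
def IsKHLMM {V : Type*} [Fintype V] (G : SimpleGraph V) (k : ℕ) : Prop :=
  ∃ (F : Fin k → SimpleGraph V) (M : SimpleGraph V),
    (∀ i, IsTwoFactor G (F i)) ∧ (∀ i j, i ≠ j → Disjoint (F i) (F j)) ∧
    IsMatchingGraph G M ∧ M.edgeSet.ncard = Fintype.card V / 2 ∧ ∀ i, Disjoint M (F i)

/-- The graph `F` on `V ⊕ W` obtained from the disjoint union of `G` (on `V`) and `H`
(on `W`) by adding the single edge between `x : V` and `y : W`.  When `G` and `H` are
connected, this added edge is a cut-edge of `F` whose removal leaves exactly the two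
components `G` and `H`. -/
def joinByEdge {V W : Type*} (G : SimpleGraph V) (H : SimpleGraph W) (x : V) (y : W) :
    SimpleGraph (V ⊕ W) :=
  SimpleGraph.fromRel (fun a b =>
    match a, b with
    | Sum.inl u, Sum.inl v => G.Adj u v
    | Sum.inr u, Sum.inr v => H.Adj u v
    | Sum.inl u, Sum.inr v => u = x ∧ v = y
    | Sum.inr _, Sum.inl _ => False)

/-- The generalized Petersen graph `P(n,m)`: vertices `a_i` (the left copies) and `b_i`
(the right copies) for `i ∈ ZMod n`, with edges `a_i a_{i+1}`, `a_i b_i`, `b_i b_{i+m}`. -/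
def genPetersen (n m : ℕ) : SimpleGraph (ZMod n ⊕ ZMod n) :=
  SimpleGraph.fromRel (fun a b =>
    match a, b with
    | Sum.inl i, Sum.inl j => j = i + 1
    | Sum.inl i, Sum.inr j => j = i
    | Sum.inr i, Sum.inr j => j = i + (m : ZMod n)
    | Sum.inr _, Sum.inl _ => False)

/-- Cyclic distance between `i` and `j` on the cycle `ZMod n`. -/
def cycDist (n : ℕ) (i j : ZMod n) : ℕ := min (i - j).val (j - i).val

/-- The Harary graph `H_{m,n}` on `ZMod n`: each vertex is adjacent to the nearest `m/2`
vertices in each direction around the circle; if `m` is odd and `n` is even, each vertex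
is also adjacent to the diametrically opposite vertex; if `m` and `n` are both odd, the
edges `(i, i + (n-1)/2)` for `0 ≤ i ≤ (n-1)/2` are added instead. -/
def harary (m n : ℕ) : SimpleGraph (ZMod n) :=
  SimpleGraph.fromRel (fun i j =>
    (1 ≤ cycDist n i j ∧ cycDist n i j ≤ m / 2) ∨
    (m % 2 = 1 ∧ n % 2 = 0 ∧ j = i + ((n / 2 : ℕ) : ZMod n)) ∨
    (m % 2 = 1 ∧ n % 2 = 1 ∧ (∃ t : ℕ, t ≤ (n - 1) / 2 ∧ i = (t : ZMod n)) ∧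
      j = i + (((n - 1) / 2 : ℕ) : ZMod n)))

/-- The graph obtained by gluing the graphs `G i` (on vertex types `V i`) at the
distinguished vertices `x i`, which are all identified to the single vertex `none`.
The `v`-components of the resulting graph at the cut-vertex `v = none` are exactly
(canonical copies of) the graphs `G i`. -/
def wedgeAt {m : ℕ} {V : Fin m → Type*} (G : ∀ i, SimpleGraph (V i)) (x : ∀ i, V i) :
    SimpleGraph (Option (Σ i : Fin m, {u : V i // u ≠ x i})) :=
  SimpleGraph.fromRel (fun a b =>
    match a, b with
    | none, some ⟨i, u⟩ => (G i).Adj (x i) u.val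
    | some ⟨i, u⟩, some ⟨j, w⟩ => ∃ h : i = j, (G j).Adj (cast (congrArg V h) u.val) w.val
    | _, _ => False)

section general
variable {V : Type*} {G : SimpleGraph V}

lemma inflation_adj {d e : G.Dart} :
    (inflation G).Adj d e ↔ e ≠ d ∧ (e.toProd.1 = d.toProd.1 ∨ e = d.symm) := by
  unfold inflation
  rw [fromRel_adj]
  constructor
  · intro hadj
    obtain ⟨hne, hr⟩ := hadj
    rcases hr with (h | h) | (h | h)
    · exact ⟨Ne.symm hne, Or.inl h.symm⟩
    · refine ⟨Ne.symm hne, Or.inr (Dart.ext _ _ ?_)⟩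
      have hs : d.symm.toProd = d.toProd.swap := rfl
      rw [hs, h, Prod.swap_swap]
    · exact ⟨Ne.symm hne, Or.inl h⟩
    · exact ⟨Ne.symm hne, Or.inr (Dart.ext _ _ h)⟩
  · rintro ⟨hne, h | h⟩
    · exact ⟨Ne.symm hne, Or.inr (Or.inl h)⟩
    · subst h
      exact ⟨Ne.symm hne, Or.inr (Or.inr (by simp [Dart.symm]))⟩

lemma inflation_neighborSet (d : G.Dart) :
    (inflation G).neighborSet d = {e | e ≠ d ∧ e.toProd.1 = d.toProd.1} ∪ {d.symm} := by
  ext e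
  simp only [mem_neighborSet, inflation_adj, Set.mem_union, Set.mem_setOf_eq,
    Set.mem_singleton_iff]
  constructor
  · rintro ⟨hne, h | h⟩
    · exact Or.inl ⟨hne, h⟩
    · exact Or.inr h
  · rintro (⟨hne, h⟩ | h)
    · exact ⟨hne, Or.inl h⟩
    · exact ⟨h ▸ d.symm_ne, Or.inr h⟩

/-- The darts of a subgraph `H ≤ G`, as a set of darts of `G`. -/
def dartsOf (G H : SimpleGraph V) : Set G.Dart := {d | H.Adj d.toProd.1 d.toProd.2}

lemma fiber_ncard (H : SimpleGraph V) (hle : H ≤ G) (x : V) :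
    {e : G.Dart | e.toProd.1 = x ∧ H.Adj x e.toProd.2}.ncard = (H.neighborSet x).ncard := by
  have himg : (fun e : G.Dart => e.toProd.2) '' {e : G.Dart | e.toProd.1 = x ∧ H.Adj x e.toProd.2}
      = H.neighborSet x := by
    ext y
    constructor
    · rintro ⟨e, ⟨h1, h2⟩, rfl⟩
      exact h2
    · intro hy
      exact ⟨⟨(x, y), hle hy⟩, ⟨rfl, hy⟩, rfl⟩
  rw [← himg]
  refine (Set.ncard_image_of_injOn ?_).symm
  rintro e ⟨h1, -⟩ e' ⟨h1', -⟩ h2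
  exact Dart.ext _ _ (Prod.ext (h1.trans h1'.symm) h2)

lemma fiber_full (x : V) :
    {e : G.Dart | e.toProd.1 = x} = {e : G.Dart | e.toProd.1 = x ∧ G.Adj x e.toProd.2} := by
  ext e
  exact ⟨fun h => ⟨h, h ▸ e.adj⟩, fun h => h.1⟩

lemma sum_fibers [Fintype V] [Fintype G.Dart] (S : Set G.Dart) :
    S.ncard = ∑ x : V, (S ∩ {e : G.Dart | e.toProd.1 = x}).ncard := by
  classical
  rw [Set.ncard_eq_toFinset_card' S]
  rw [Finset.card_eq_sum_card_fiberwise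
    (f := fun e : G.Dart => e.toProd.1) (t := Finset.univ) (fun e _ => Finset.mem_univ _)]
  refine Finset.sum_congr rfl (fun x _ => ?_)
  rw [Set.ncard_eq_toFinset_card' _]
  congr 1
  ext e
  simp [Set.mem_toFinset]

lemma ncard_inter_fiber_ge (k : ℕ) (hk : 2 ≤ k) [Fintype V] [Fintype G.Dart]
    (hdeg : ∀ x : V, k ≤ (G.neighborSet x).ncard)
    (S : Set G.Dart) (hS : IsKTDS (inflation G) k S) (x : V) :
    k ≤ (S ∩ {e : G.Dart | e.toProd.1 = x}).ncard := by
  classical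
  by_contra hlt
  push_neg at hlt
  set T : Set G.Dart := S ∩ {e : G.Dart | e.toProd.1 = x} with hT
  -- key: for d in the fiber, S ∩ N(d) ⊆ (T \ {d}) ∪ {d.symm}
  have hkey : ∀ d : G.Dart, d.toProd.1 = x →
      S ∩ (inflation G).neighborSet d ⊆ (T \ {d}) ∪ {d.symm} := by
    intro d hd
    rw [inflation_neighborSet]
    rintro e ⟨heS, he⟩
    rcases he with ⟨hne, hfst⟩ | he
    · exact Or.inl ⟨⟨heS, by rw [Set.mem_setOf_eq, hfst, hd]⟩, hne⟩
    · exact Or.inr he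
  have hbound : ∀ d : G.Dart, d.toProd.1 = x →
      (S ∩ (inflation G).neighborSet d).ncard ≤ (T \ {d}).ncard + 1 := by
    intro d hd
    calc (S ∩ (inflation G).neighborSet d).ncard
        ≤ ((T \ {d}) ∪ {d.symm}).ncard := Set.ncard_le_ncard (hkey d hd) (Set.toFinite _)
      _ ≤ (T \ {d}).ncard + ({d.symm} : Set G.Dart).ncard :=
          Set.ncard_union_le _ _
      _ = (T \ {d}).ncard + 1 := by rw [Set.ncard_singleton]
  rcases lt_or_ge T.ncard (k - 1) with hTlt | hTge
  · -- pick any dart in the fiber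
    have hfib : 0 < {e : G.Dart | e.toProd.1 = x}.ncard := by
      rw [fiber_full, fiber_ncard G le_rfl]
      have := hdeg x
      omega
    obtain ⟨d, hd⟩ := Set.nonempty_of_ncard_ne_zero
      (s := {e : G.Dart | e.toProd.1 = x}) (by omega)
    have := hS d
    have h2 := hbound d hd
    have h3 : (T \ {d}).ncard ≤ T.ncard := Set.ncard_le_ncard Set.diff_subset (Set.toFinite _)
    omega
  · -- T.ncard = k - 1 ≥ 1, pick d ∈ T
    have hT1 : T.ncard = k - 1 := by omega
    obtain ⟨d, hd⟩ := Set.nonempty_of_ncard_ne_zero (by omega : T.ncard ≠ 0)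
    have hdx : d.toProd.1 = x := hd.2
    have := hS d
    have h2 := hbound d hdx
    have h3 : (T \ {d}).ncard = T.ncard - 1 := by
      rw [Set.ncard_sdiff_singleton_of_mem hd]
    omega

lemma lower_bound (k : ℕ) (hk : 2 ≤ k) [Fintype V] [Fintype G.Dart]
    (hdeg : ∀ x : V, k ≤ (G.neighborSet x).ncard)
    (S : Set G.Dart) (hS : IsKTDS (inflation G) k S) :
    Fintype.card V * k ≤ S.ncard := by
  rw [sum_fibers]
  calc Fintype.card V * k = ∑ _x : V, k := by
        rw [Finset.sum_const, Finset.card_univ, smul_eq_mul, mul_comm]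
    _ ≤ ∑ x : V, (S ∩ {e : G.Dart | e.toProd.1 = x}).ncard :=
        Finset.sum_le_sum (fun x _ => ncard_inter_fiber_ge k hk hdeg S hS x)

lemma even_ncard_of_invol {α : Type*} (f : α → α) (hf : ∀ a, f (f a) = a) :
    ∀ (m : ℕ) (S : Set α), S.Finite → S.ncard ≤ m → (∀ a ∈ S, f a ∈ S) →
    (∀ a ∈ S, f a ≠ a) → Even S.ncard := by
  intro m
  induction m with
  | zero =>
    intro S hfin hle _ _
    simp [Nat.le_zero.mp hle]
  | succ m ih =>
    intro S hfin hle hmem hne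
    rcases S.eq_empty_or_nonempty with rfl | ⟨a, ha⟩
    · simp
    · have hfa : f a ∈ S := hmem a ha
      have hfa' : f a ≠ a := hne a ha
      set S' : Set α := S \ {a, f a} with hS'
      have hfin' : S'.Finite := hfin.subset Set.diff_subset
      have hcard : S.ncard = S'.ncard + 2 := by
        have hsub : ({a, f a} : Set α) ⊆ S := by
          rintro x (rfl | rfl) <;> assumption
        have hpair : ({a, f a} : Set α).ncard = 2 := Set.ncard_pair (Ne.symm hfa')
        have hdiff : (S \ {a, f a}).ncard = S.ncard - ({a, f a} : Set α).ncard :=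
          Set.ncard_diff hsub (Set.toFinite _)
        rw [hpair] at hdiff
        have hge : 2 ≤ S.ncard := by
          rw [← hpair]
          exact Set.ncard_le_ncard hsub hfin
        rw [hS']
        omega
      have hEven : Even S'.ncard := by
        refine ih S' hfin' (by omega) ?_ ?_
        · rintro b ⟨hbS, hb⟩
          refine ⟨hmem b hbS, ?_⟩
          simp only [Set.mem_insert_iff, Set.mem_singleton_iff] at hb ⊢
          push_neg at hb ⊢
          constructor
          · intro h; exact hb.2 (by rw [← hf b, h])
          · intro h; exact hb.1 (by rw [← hf b, h, hf])
        · exact fun b hb => hne b hb.1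
      rw [hcard]
      rcases hEven with ⟨t, ht⟩
      exact ⟨t + 1, by omega⟩

lemma lower_bound_odd (k : ℕ) (hk : 2 ≤ k) [Fintype V] [Fintype G.Dart]
    (hdeg : ∀ x : V, k ≤ (G.neighborSet x).ncard)
    (hodd : Odd (Fintype.card V * k))
    (S : Set G.Dart) (hS : IsKTDS (inflation G) k S) :
    Fintype.card V * k + 1 ≤ S.ncard := by
  classical
  have hlb := lower_bound k hk hdeg S hS
  rcases Nat.lt_or_ge (Fintype.card V * k) S.ncard with h | h
  · omega
  have heq : S.ncard = Fintype.card V * k := le_antisymm h hlb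
  -- then every fiber has exactly k, so S is closed under symm
  exfalso
  have hfib : ∀ x : V, (S ∩ {e : G.Dart | e.toProd.1 = x}).ncard = k := by
    by_contra hcon
    push_neg at hcon
    obtain ⟨x, hx⟩ := hcon
    have hgt : k < (S ∩ {e : G.Dart | e.toProd.1 = x}).ncard :=
      lt_of_le_of_ne (ncard_inter_fiber_ge k hk hdeg S hS x) (Ne.symm hx)
    have : Fintype.card V * k < S.ncard := by
      rw [sum_fibers]
      calc Fintype.card V * k = ∑ _x : V, k := by
            rw [Finset.sum_const, Finset.card_univ, smul_eq_mul, mul_comm]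
        _ < ∑ x : V, (S ∩ {e : G.Dart | e.toProd.1 = x}).ncard := by
            refine Finset.sum_lt_sum (fun y _ => ncard_inter_fiber_ge k hk hdeg S hS y)
              ⟨x, Finset.mem_univ x, hgt⟩
    omega
  have hclosed : ∀ d ∈ S, d.symm ∈ S := by
    intro d hd
    by_contra hds
    have hsub : S ∩ (inflation G).neighborSet d ⊆
        (S ∩ {e : G.Dart | e.toProd.1 = d.toProd.1}) \ {d} := by
      rw [inflation_neighborSet]
      rintro e ⟨heS, he⟩
      rcases he with ⟨hne, hfst⟩ | he
      · exact ⟨⟨heS, hfst⟩, hne⟩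
      · exact absurd (he ▸ heS) hds
    have h1 := hS d
    have h2 : (S ∩ (inflation G).neighborSet d).ncard ≤
        ((S ∩ {e : G.Dart | e.toProd.1 = d.toProd.1}) \ {d}).ncard :=
      Set.ncard_le_ncard hsub (Set.toFinite _)
    have h3 : ((S ∩ {e : G.Dart | e.toProd.1 = d.toProd.1}) \ {d}).ncard
        = (S ∩ {e : G.Dart | e.toProd.1 = d.toProd.1}).ncard - 1 :=
      Set.ncard_sdiff_singleton_of_mem ⟨hd, rfl⟩
    have h4 := hfib d.toProd.1
    omega
  have hev : Even S.ncard := by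
    refine even_ncard_of_invol Dart.symm Dart.symm_symm S.ncard S (Set.toFinite _) le_rfl
      hclosed (fun d _ => d.symm_ne)
  rw [heq] at hev
  exact (Nat.not_even_iff_odd.mpr hodd) hev

lemma upper_ktds (k : ℕ) [Fintype V] [Fintype G.Dart]
    (H : SimpleGraph V) (hle : H ≤ G)
    (hdeg : ∀ x : V, k ≤ (H.neighborSet x).ncard) :
    IsKTDS (inflation G) k (dartsOf G H) := by
  classical
  intro d
  set S := dartsOf G H with hSdef
  have hfibk : ∀ x : V, (S ∩ {e : G.Dart | e.toProd.1 = x}).ncard = (H.neighborSet x).ncard := by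
    intro x
    rw [← fiber_ncard H hle x]
    congr 1
    ext e
    constructor
    · rintro ⟨he, rfl⟩
      exact ⟨rfl, he⟩
    · rintro ⟨hx, ha⟩
      exact ⟨by rw [hSdef]; exact (by rw [dartsOf, Set.mem_setOf_eq, hx]; exact ha), hx⟩
  by_cases hdS : d ∈ S
  · -- d ∈ S : k-1 clique neighbours plus d.symm
    have hsub : ((S ∩ {e : G.Dart | e.toProd.1 = d.toProd.1}) \ {d}) ∪ {d.symm}
        ⊆ S ∩ (inflation G).neighborSet d := by
      rintro e (⟨⟨heS, hfst⟩, hne⟩ | he)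
      · exact ⟨heS, inflation_adj.mpr ⟨hne, Or.inl hfst⟩⟩
      · rcases he with rfl
        refine ⟨?_, inflation_adj.mpr ⟨d.symm_ne, Or.inr rfl⟩⟩
        rw [hSdef, dartsOf, Set.mem_setOf_eq]
        exact (hdS : H.Adj d.toProd.1 d.toProd.2).symm
    have hcard : (((S ∩ {e : G.Dart | e.toProd.1 = d.toProd.1}) \ {d}) ∪ {d.symm}).ncard
        = ((S ∩ {e : G.Dart | e.toProd.1 = d.toProd.1}) \ {d}).ncard + 1 := by
      rw [Set.union_singleton, Set.ncard_insert_of_notMem ?_ (Set.toFinite _)]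
      rintro ⟨⟨-, hfst⟩, -⟩
      exact d.symm.fst_ne_snd (by rw [hfst]; rfl)
    have h3 : ((S ∩ {e : G.Dart | e.toProd.1 = d.toProd.1}) \ {d}).ncard
        = (S ∩ {e : G.Dart | e.toProd.1 = d.toProd.1}).ncard - 1 :=
      Set.ncard_sdiff_singleton_of_mem ⟨hdS, rfl⟩
    have h4 := hfibk d.toProd.1
    have h5 := hdeg d.toProd.1
    have h6 : (((S ∩ {e : G.Dart | e.toProd.1 = d.toProd.1}) \ {d}) ∪ {d.symm}).ncard
        ≤ (S ∩ (inflation G).neighborSet d).ncard :=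
      Set.ncard_le_ncard hsub (Set.toFinite _)
    have h7 : 1 ≤ (S ∩ {e : G.Dart | e.toProd.1 = d.toProd.1}).ncard := by
      have : (S ∩ {e : G.Dart | e.toProd.1 = d.toProd.1}).Nonempty := ⟨d, hdS, rfl⟩
      have := this.ncard_pos (Set.toFinite _)
      omega
    omega
  · -- d ∉ S : the k clique darts at d.fst
    have hsub : (S ∩ {e : G.Dart | e.toProd.1 = d.toProd.1})
        ⊆ S ∩ (inflation G).neighborSet d := by
      rintro e ⟨heS, hfst⟩
      refine ⟨heS, inflation_adj.mpr ⟨?_, Or.inl hfst⟩⟩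
      rintro rfl
      exact hdS heS
    have h6 := Set.ncard_le_ncard hsub (Set.toFinite _)
    have h4 := hfibk d.toProd.1
    have h5 := hdeg d.toProd.1
    omega

lemma dartsOf_ncard [Fintype V] [Fintype G.Dart] (H : SimpleGraph V) (hle : H ≤ G) :
    (dartsOf G H).ncard = ∑ x : V, (H.neighborSet x).ncard := by
  rw [sum_fibers]
  refine Finset.sum_congr rfl (fun x _ => ?_)
  rw [← fiber_ncard H hle x]
  congr 1
  ext e
  constructor
  · rintro ⟨he, rfl⟩
    exact ⟨rfl, he⟩
  · rintro ⟨hx, ha⟩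
    exact ⟨by rw [dartsOf, Set.mem_setOf_eq, hx]; exact ha, hx⟩

end general

section zmod
variable {n : ℕ} [NeZero n]
set_option linter.unusedSectionVars false

lemma cast_inj_of_lt {a b : ℕ} (ha : a < n) (hb : b < n) : (a : ZMod n) = b ↔ a = b := by
  constructor
  · intro h
    have := congrArg ZMod.val h
    rwa [ZMod.val_natCast_of_lt ha, ZMod.val_natCast_of_lt hb] at this
  · rintro rfl; rfl

lemma neg_cast_eq {b : ℕ} (hb : b ≤ n) : -((b : ℕ) : ZMod n) = ((n - b : ℕ) : ZMod n) := by
  have : ((n - b : ℕ) : ZMod n) = ((n : ℕ) : ZMod n) - b := by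
    push_cast [Nat.cast_sub hb]; ring
  rw [this, ZMod.natCast_self]
  ring

lemma sub_cast_eq (i : ZMod n) {b : ℕ} (hb : b ≤ n) :
    i - ((b : ℕ) : ZMod n) = i + ((n - b : ℕ) : ZMod n) := by
  rw [← neg_cast_eq hb]; ring

lemma cycDist_add_cast (i : ZMod n) {c : ℕ} (h1 : 0 < c) (h2 : c < n) :
    cycDist n i (i + (c : ZMod n)) = min (n - c) c := by
  have hval : ((i + (c : ZMod n)) - i) = (c : ZMod n) := by ring
  have hval2 : (i - (i + (c : ZMod n))) = -(c : ZMod n) := by ring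
  rw [cycDist, hval, hval2, neg_cast_eq (le_of_lt h2),
    ZMod.val_natCast_of_lt h2, ZMod.val_natCast_of_lt (by omega)]

lemma cycDist_self (i : ZMod n) : cycDist n i i = 0 := by
  simp [cycDist]

lemma cycDist_comm (i j : ZMod n) : cycDist n i j = cycDist n j i := by
  rw [cycDist, cycDist, min_comm]

/-- key characterization of a cyclic-distance interval -/
lemma cycDist_interval_iff {lo hi : ℕ} (hlo : 1 ≤ lo) (hhi : 2 * hi < n) (i j : ZMod n) :
    (lo ≤ cycDist n i j ∧ cycDist n i j ≤ hi) ↔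
      ∃ s : ℕ, lo ≤ s ∧ s ≤ hi ∧ (j = i + (s : ZMod n) ∨ j = i - (s : ZMod n)) := by
  constructor
  · rintro ⟨h1, h2⟩
    set a := (j - i).val with ha
    have hj : j = i + (a : ZMod n) := by
      rw [ha, ZMod.natCast_val, ZMod.cast_id]; ring
    have halt : a < n := ZMod.val_lt _
    have hane : a ≠ 0 := by
      intro h0
      rw [h0] at hj; simp at hj; rw [hj, cycDist_self] at h1; omega
    have hcd : cycDist n i j = min (n - a) a := by
      rw [hj]; exact cycDist_add_cast i (by omega) halt
    rcases le_total a (n - a) with hle | hle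
    · exact ⟨a, by omega, by omega, Or.inl hj⟩
    · refine ⟨n - a, by omega, by omega, Or.inr ?_⟩
      rw [sub_cast_eq i (by omega : n - a ≤ n)]
      have : ((n - (n - a) : ℕ) : ZMod n) = (a : ZMod n) := by
        congr 1; omega
      rw [this]; exact hj
  · rintro ⟨s, hs1, hs2, rfl | rfl⟩
    · have hcd : cycDist n i (i + (s : ZMod n)) = min (n - s) s :=
        cycDist_add_cast i (by omega) (by omega)
      rw [hcd]; omega
    · rw [sub_cast_eq i (by omega : s ≤ n)]
      have hcd : cycDist n i (i + ((n - s : ℕ) : ZMod n)) = min (n - (n - s)) (n - s) :=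
        cycDist_add_cast i (by omega) (by omega)
      rw [hcd]; omega

end zmod

/-- circulant subgraph with distances in `[lo, hi]` -/
def circSub (n lo hi : ℕ) : SimpleGraph (ZMod n) :=
  SimpleGraph.fromRel (fun i j => lo ≤ cycDist n i j ∧ cycDist n i j ≤ hi)

section circ
variable {n : ℕ} [NeZero n]
set_option linter.unusedSectionVars false

lemma circSub_adj {lo hi : ℕ} (hlo : 1 ≤ lo) {i j : ZMod n} :
    (circSub n lo hi).Adj i j ↔ lo ≤ cycDist n i j ∧ cycDist n i j ≤ hi := by
  rw [circSub, fromRel_adj]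
  constructor
  · rintro ⟨hne, h | h⟩
    · exact h
    · rwa [cycDist_comm]
  · intro h
    refine ⟨?_, Or.inl h⟩
    rintro rfl
    rw [cycDist_self] at h
    omega

lemma circSub_neighborSet {lo hi : ℕ} (hlo : 1 ≤ lo) (hhi : 2 * hi < n) (i : ZMod n) :
    (circSub n lo hi).neighborSet i =
      (fun s : ℕ => i + (s : ZMod n)) '' (Set.Icc lo hi) ∪
      (fun s : ℕ => i - (s : ZMod n)) '' (Set.Icc lo hi) := by
  ext j
  rw [mem_neighborSet, circSub_adj hlo, cycDist_interval_iff hlo hhi]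
  constructor
  · rintro ⟨s, h1, h2, h | h⟩
    · exact Or.inl ⟨s, ⟨h1, h2⟩, h.symm⟩
    · exact Or.inr ⟨s, ⟨h1, h2⟩, h.symm⟩
  · rintro (⟨s, ⟨h1, h2⟩, h⟩ | ⟨s, ⟨h1, h2⟩, h⟩)
    · exact ⟨s, h1, h2, Or.inl h.symm⟩
    · exact ⟨s, h1, h2, Or.inr h.symm⟩

lemma circSub_degree {lo hi : ℕ} (hlo : 1 ≤ lo) (hhi : 2 * hi < n) (i : ZMod n) :
    ((circSub n lo hi).neighborSet i).ncard = 2 * (hi + 1 - lo) := by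
  rw [circSub_neighborSet hlo hhi]
  have hinj1 : Set.InjOn (fun s : ℕ => i + (s : ZMod n)) (Set.Icc lo hi) := by
    rintro a ⟨-, ha⟩ b ⟨-, hb⟩ h
    simp only [add_right_inj] at h
    exact (cast_inj_of_lt (by omega) (by omega)).mp h
  have hinj2 : Set.InjOn (fun s : ℕ => i - (s : ZMod n)) (Set.Icc lo hi) := by
    rintro a ⟨-, ha⟩ b ⟨-, hb⟩ h
    simp only [sub_right_inj] at h
    exact (cast_inj_of_lt (by omega) (by omega)).mp h
  have hIcc : (Set.Icc lo hi).ncard = hi + 1 - lo := by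
    rw [← Finset.coe_Icc, Set.ncard_coe_finset, Nat.card_Icc]
  have hdisj : Disjoint ((fun s : ℕ => i + (s : ZMod n)) '' (Set.Icc lo hi))
      ((fun s : ℕ => i - (s : ZMod n)) '' (Set.Icc lo hi)) := by
    rw [Set.disjoint_left]
    rintro x ⟨a, ⟨ha1, ha2⟩, rfl⟩ ⟨b, ⟨hb1, hb2⟩, hb⟩
    have : i + ((a : ℕ) : ZMod n) = i + ((n - b : ℕ) : ZMod n) := by
      rw [← sub_cast_eq i (by omega : b ≤ n)]; exact hb.symm
    simp only [add_right_inj] at this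
    have := (cast_inj_of_lt (by omega) (by omega)).mp this
    omega
  rw [Set.ncard_union_eq hdisj (Set.toFinite _) (Set.toFinite _),
    Set.ncard_image_of_injOn hinj1, Set.ncard_image_of_injOn hinj2, hIcc]
  ring

lemma circSub_le_harary {m lo hi : ℕ} (hlo : 1 ≤ lo) (hhi : hi ≤ m / 2) :
    circSub n lo hi ≤ harary m n := by
  intro i j hadj
  rw [circSub_adj hlo] at hadj
  rw [harary, fromRel_adj]
  refine ⟨?_, Or.inl (Or.inl ⟨by omega, by omega⟩)⟩
  rintro rfl
  rw [cycDist_self] at hadj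
  omega

lemma not_mem_circSub_nbr {lo hi : ℕ} (hlo : 1 ≤ lo) {i j : ZMod n}
    (h : ¬ (lo ≤ cycDist n i j ∧ cycDist n i j ≤ hi)) :
    j ∉ (circSub n lo hi).neighborSet i := by
  rw [mem_neighborSet, circSub_adj hlo]
  exact h

end circ

section valtools
variable {n : ℕ} [NeZero n]
set_option linter.unusedSectionVars false

lemma val_add_cast (i : ZMod n) {c : ℕ} (hc : c < n) :
    (i + (c : ZMod n)).val = if i.val + c < n then i.val + c else i.val + c - n := by
  rw [ZMod.val_add, ZMod.val_natCast_of_lt hc]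
  have hi := ZMod.val_lt i
  split_ifs with h
  · exact Nat.mod_eq_of_lt h
  · rw [Nat.mod_eq_sub_mod (by omega), Nat.mod_eq_of_lt (by omega)]

lemma natCast_val_eq (i : ZMod n) : ((i.val : ℕ) : ZMod n) = i := by
  rw [ZMod.natCast_val, ZMod.cast_id]

lemma one_eq_cast : (1 : ZMod n) = ((1 : ℕ) : ZMod n) := by norm_cast

lemma sub_one_eq (h2 : 2 ≤ n) (i : ZMod n) : i - 1 = i + ((n - 1 : ℕ) : ZMod n) := by
  rw [one_eq_cast, sub_cast_eq i (by omega : 1 ≤ n)]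

lemma eq_iff_val_eq (i j : ZMod n) : i = j ↔ i.val = j.val :=
  ⟨fun h => h ▸ rfl, fun h => ZMod.val_injective n h⟩

end valtools

/-- diameter perfect matching, for `n` even -/
def diamMatch (n : ℕ) : SimpleGraph (ZMod n) :=
  SimpleGraph.fromRel (fun i j => j = i + ((n / 2 : ℕ) : ZMod n))

/-- distance-one perfect matching `{0,1},{2,3},…`, for `n` even -/
def matchOne (n : ℕ) : SimpleGraph (ZMod n) :=
  SimpleGraph.fromRel (fun a b => a.val % 2 = 0 ∧ b = a + 1)

/-- distance-one near matching plus an extra edge at `0`: edges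
`{0,1},{2,3},…,{n-3,n-2}` and `{n-1,0}`, for `n` odd -/
def gadgetOne (n : ℕ) : SimpleGraph (ZMod n) :=
  SimpleGraph.fromRel (fun a b =>
    (a.val % 2 = 0 ∧ a.val ≠ n - 1 ∧ b = a + 1) ∨ (a.val = n - 1 ∧ b = 0))

/-- the special edges of the Harary graph for `m, n` both odd -/
def specials (n : ℕ) : SimpleGraph (ZMod n) :=
  SimpleGraph.fromRel (fun i j =>
    (∃ t : ℕ, t ≤ (n - 1) / 2 ∧ i = (t : ZMod n)) ∧ j = i + (((n - 1) / 2 : ℕ) : ZMod n))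

section gadgets
variable {n : ℕ} [NeZero n]
set_option linter.unusedSectionVars false

lemma diamMatch_neighborSet (hn : n % 2 = 0) (i : ZMod n) :
    (diamMatch n).neighborSet i = {i + ((n / 2 : ℕ) : ZMod n)} := by
  have h2 : 2 ≤ n := by have := Nat.pos_of_ne_zero (NeZero.ne n); omega
  have hc : n / 2 < n := by omega
  ext j
  rw [mem_neighborSet, diamMatch, fromRel_adj, Set.mem_singleton_iff]
  constructor
  · rintro ⟨hne, rfl | hij⟩
    · rfl
    · -- i = j + n/2  ⇒  j = i + n/2
      rw [hij]
      have : ((n / 2 : ℕ) : ZMod n) + ((n / 2 : ℕ) : ZMod n) = 0 := by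
        rw [← Nat.cast_add]
        have : n / 2 + n / 2 = n := by omega
        rw [this, ZMod.natCast_self]
      rw [add_assoc, this, add_zero]
  · rintro rfl
    refine ⟨?_, Or.inl rfl⟩
    intro h
    have := congrArg ZMod.val h
    rw [val_add_cast i hc] at this
    have hi := ZMod.val_lt i
    split_ifs at this <;> omega

lemma diamMatch_degree (hn : n % 2 = 0) (i : ZMod n) :
    ((diamMatch n).neighborSet i).ncard = 1 := by
  rw [diamMatch_neighborSet hn, Set.ncard_singleton]

lemma diamMatch_le_harary {m : ℕ} (hm : m % 2 = 1) (hn : n % 2 = 0) :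
    diamMatch n ≤ harary m n := by
  intro i j hadj
  rw [diamMatch, fromRel_adj] at hadj
  rw [harary, fromRel_adj]
  obtain ⟨hne, h | h⟩ := hadj
  · exact ⟨hne, Or.inl (Or.inr (Or.inl ⟨hm, hn, h⟩))⟩
  · exact ⟨hne, Or.inr (Or.inr (Or.inl ⟨hm, hn, h⟩))⟩

lemma matchOne_neighborSet_even (hn : n % 2 = 0) {i : ZMod n} (hi : i.val % 2 = 0) :
    (matchOne n).neighborSet i = {i + 1} := by
  have h2 : 2 ≤ n := by have := Nat.pos_of_ne_zero (NeZero.ne n); omega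
  ext j
  rw [mem_neighborSet, matchOne, fromRel_adj, Set.mem_singleton_iff]
  constructor
  · rintro ⟨hne, ⟨-, rfl⟩ | ⟨hj, hij⟩⟩
    · rfl
    · -- i = j + 1 with j.val even: impossible since i.val even
      exfalso
      have hval : i.val = (j + 1).val := by rw [hij]
      rw [one_eq_cast, val_add_cast j (by omega : 1 < n)] at hval
      have hjlt := ZMod.val_lt j
      split_ifs at hval <;> omega
  · rintro rfl
    have hne : i + 1 ≠ i := by
      intro h
      have := congrArg ZMod.val h
      rw [one_eq_cast, val_add_cast i (by omega : 1 < n)] at this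
      have hi' := ZMod.val_lt i
      split_ifs at this <;> omega
    exact ⟨hne.symm, Or.inl ⟨hi, rfl⟩⟩

lemma matchOne_neighborSet_odd (hn : n % 2 = 0) {i : ZMod n} (hi : i.val % 2 = 1) :
    (matchOne n).neighborSet i = {i - 1} := by
  have h2 : 2 ≤ n := by have := Nat.pos_of_ne_zero (NeZero.ne n); omega
  have hkey : (i - 1).val = i.val - 1 := by
    rw [sub_one_eq h2, val_add_cast i (by omega : n - 1 < n)]
    have hi' := ZMod.val_lt i
    split_ifs <;> omega
  ext j
  rw [mem_neighborSet, matchOne, fromRel_adj, Set.mem_singleton_iff]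
  constructor
  · rintro ⟨hne, ⟨hi0, rfl⟩ | ⟨hj, hij⟩⟩
    · omega
    · rw [hij]; ring
  · rintro rfl
    have hne : i - 1 ≠ i := by
      intro h
      rw [eq_iff_val_eq, hkey] at h
      have hi' := ZMod.val_lt i
      omega
    refine ⟨hne.symm, Or.inr ⟨by omega, by ring⟩⟩

lemma matchOne_degree (hn : n % 2 = 0) (i : ZMod n) :
    ((matchOne n).neighborSet i).ncard = 1 := by
  rcases Nat.even_or_odd i.val with h | h
  · rw [matchOne_neighborSet_even hn (Nat.even_iff.mp h), Set.ncard_singleton]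
  · rw [matchOne_neighborSet_odd hn (Nat.odd_iff.mp h), Set.ncard_singleton]

end gadgets

section gadgets2
variable {n : ℕ} [NeZero n]
set_option linter.unusedSectionVars false

lemma val_add_one (h2 : 2 ≤ n) (i : ZMod n) :
    (i + 1).val = if i.val = n - 1 then 0 else i.val + 1 := by
  have hv := ZMod.val_lt i
  rw [one_eq_cast, val_add_cast i (by omega : 1 < n)]
  split_ifs <;> omega

lemma val_sub_one (h2 : 2 ≤ n) (i : ZMod n) :
    (i - 1).val = if i.val = 0 then n - 1 else i.val - 1 := by
  have hv := ZMod.val_lt i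
  rw [sub_one_eq h2, val_add_cast i (by omega : n - 1 < n)]
  split_ifs <;> omega

lemma eq_add_one_iff (h2 : 2 ≤ n) {i j : ZMod n} : j = i + 1 ↔ i = j - 1 := by
  constructor <;> (rintro rfl; ring)

lemma gadgetOne_neighborSet (hn : n % 2 = 1) (h3 : 3 ≤ n) (i : ZMod n) :
    (gadgetOne n).neighborSet i =
      if i = 0 then {i + 1, i - 1} else if i.val % 2 = 1 then {i - 1} else {i + 1} := by
  have h2 : 2 ≤ n := by omega
  have hv := ZMod.val_lt i
  have hA := val_add_one h2 i
  have hB := val_sub_one h2 i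
  have hne1 : i ≠ i + 1 := by
    intro h; rw [eq_iff_val_eq, hA] at h; split_ifs at h <;> omega
  have hne2 : i ≠ i - 1 := by
    intro h; rw [eq_iff_val_eq, hB] at h; split_ifs at h <;> omega
  ext j
  rw [mem_neighborSet, gadgetOne, fromRel_adj]
  by_cases hz : i = 0
  · rw [if_pos hz]
    have hzv : i.val = 0 := by rw [hz, ZMod.val_zero]
    constructor
    · rintro ⟨hne, (⟨he, hn1, rfl⟩ | ⟨hn1, rfl⟩) | (⟨he, hn1, hij⟩ | ⟨hn1, hij⟩)⟩
      · exact Set.mem_insert _ _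
      · exact absurd hn1 (by omega)
      · exact Set.mem_insert_iff.mpr (Or.inr (by rw [Set.mem_singleton_iff, hij]; ring))
      · refine Set.mem_insert_iff.mpr (Or.inr ?_)
        rw [Set.mem_singleton_iff, eq_iff_val_eq, hB, if_pos hzv]
        exact hn1
    · rintro (rfl | rfl)
      · exact ⟨hne1, Or.inl (Or.inl ⟨by omega, by omega, rfl⟩)⟩
      · refine ⟨hne2, Or.inr (Or.inr ⟨?_, hz⟩)⟩
        rw [hB, if_pos hzv]
  · rw [if_neg hz]
    have hz' : i.val ≠ 0 := fun h => hz ((ZMod.val_eq_zero i).mp h)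
    by_cases ho : i.val % 2 = 1
    · rw [if_pos ho]
      constructor
      · rintro ⟨hne, (⟨he, hn1, rfl⟩ | ⟨hn1, rfl⟩) | (⟨he, hn1, hij⟩ | ⟨hn1, hij⟩)⟩
        · exact absurd he (by omega)
        · exact absurd hn1 (by omega)
        · rw [Set.mem_singleton_iff, hij]; ring
        · exact absurd hij hz
      · rintro rfl
        refine ⟨hne2, Or.inr (Or.inl ⟨?_, ?_, by ring⟩)⟩
        · rw [hB, if_neg hz']; omega
        · rw [hB, if_neg hz']; omega
    · rw [if_neg ho]
      constructor
      · rintro ⟨hne, (⟨he, hn1, rfl⟩ | ⟨hn1, rfl⟩) | (⟨he, hn1, hij⟩ | ⟨hn1, hij⟩)⟩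
        · rfl
        · rw [Set.mem_singleton_iff, eq_iff_val_eq, hA, if_pos hn1, ZMod.val_zero]
        · exfalso
          have hj : j = i - 1 := by rw [hij]; ring
          have : j.val = i.val - 1 := by rw [hj, hB, if_neg hz']
          omega
        · exact absurd hij hz
      · rintro rfl
        by_cases hlast : i.val = n - 1
        · refine ⟨hne1, Or.inl (Or.inr ⟨hlast, ?_⟩)⟩
          rw [eq_iff_val_eq, hA, if_pos hlast, ZMod.val_zero]
        · exact ⟨hne1, Or.inl (Or.inl ⟨by omega, hlast, rfl⟩)⟩

lemma gadgetOne_degree (hn : n % 2 = 1) (h3 : 3 ≤ n) (i : ZMod n) :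
    ((gadgetOne n).neighborSet i).ncard = if i = 0 then 2 else 1 := by
  have h2 : 2 ≤ n := by omega
  rw [gadgetOne_neighborSet hn h3]
  by_cases hz : i = 0
  · rw [if_pos hz, if_pos hz]
    refine Set.ncard_pair ?_
    intro h
    have : (i + 1).val = (i - 1).val := by rw [h]
    rw [val_add_one h2, val_sub_one h2, hz, ZMod.val_zero] at this
    split_ifs at this <;> omega
  · rw [if_neg hz, if_neg hz]
    split_ifs <;> exact Set.ncard_singleton _

lemma gadgetOne_le_harary {m : ℕ} (hm : 2 ≤ m) (hmn : m < n) (hn : n % 2 = 1) (h3 : 3 ≤ n) :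
    gadgetOne n ≤ harary m n := by
  have h2 : 2 ≤ n := by omega
  intro i j hadj
  have hcd1 : ∀ x : ZMod n, cycDist n x (x + 1) = 1 := by
    intro x
    rw [one_eq_cast, cycDist_add_cast x (by omega) (by omega)]
    omega
  rw [gadgetOne, fromRel_adj] at hadj
  rw [harary, fromRel_adj]
  obtain ⟨hne, h⟩ := hadj
  refine ⟨hne, Or.inl (Or.inl ?_)⟩
  have hd : cycDist n i j = 1 := by
    rcases h with (⟨-, -, rfl⟩ | ⟨h1, rfl⟩) | (⟨-, -, hij⟩ | ⟨h1, hij⟩)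
    · exact hcd1 i
    · -- i.val = n-1, j = 0 = i + 1
      have : (0 : ZMod n) = i + 1 := by
        rw [eq_iff_val_eq, val_add_one h2, ZMod.val_zero]
        simp [h1]
      rw [this]; exact hcd1 i
    · rw [hij, cycDist_comm]; exact hcd1 j
    · have : (0 : ZMod n) = j + 1 := by
        rw [eq_iff_val_eq, val_add_one h2, ZMod.val_zero]
        simp [h1]
      rw [hij, this, cycDist_comm]; exact hcd1 j
  rw [hd]
  omega

end gadgets2

section specialsec
variable {n : ℕ} [NeZero n]
set_option linter.unusedSectionVars false

lemma val_sub_cast (i : ZMod n) {c : ℕ} (h1 : 0 < c) (hc : c < n) :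
    (i - (c : ZMod n)).val = if i.val < c then i.val + n - c else i.val - c := by
  have hv := ZMod.val_lt i
  rw [sub_cast_eq i (le_of_lt hc), val_add_cast i (by omega : n - c < n)]
  split_ifs <;> omega

lemma specials_spec_iff (hn : n % 2 = 1) (h3 : 3 ≤ n) (x : ZMod n) :
    (∃ t : ℕ, t ≤ (n - 1) / 2 ∧ x = (t : ZMod n)) ↔ x.val ≤ (n - 1) / 2 := by
  constructor
  · rintro ⟨t, ht, rfl⟩
    rw [ZMod.val_natCast_of_lt (by omega)]
    exact ht
  · intro hx
    exact ⟨x.val, hx, (natCast_val_eq x).symm⟩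

lemma specials_neighborSet (hn : n % 2 = 1) (h3 : 3 ≤ n) (i : ZMod n) :
    (specials n).neighborSet i =
      if i.val < (n - 1) / 2 then {i + (((n - 1) / 2 : ℕ) : ZMod n)}
      else if i.val = (n - 1) / 2 then
        {i + (((n - 1) / 2 : ℕ) : ZMod n), i - (((n - 1) / 2 : ℕ) : ZMod n)}
      else {i - (((n - 1) / 2 : ℕ) : ZMod n)} := by
  set h : ℕ := (n - 1) / 2 with hh
  have hhn : 2 * h + 1 = n := by omega
  have hpos : 0 < h := by omega
  have hv := ZMod.val_lt i
  have hA := val_add_cast i (show h < n by omega)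
  have hB := val_sub_cast i hpos (show h < n by omega)
  have hne1 : i ≠ i + (h : ZMod n) := by
    intro hq
    have := congrArg ZMod.val hq
    rw [hA] at this; split_ifs at this <;> omega
  have hne2 : i ≠ i - (h : ZMod n) := by
    intro hq
    have := congrArg ZMod.val hq
    rw [hB] at this; split_ifs at this <;> omega
  -- characterize the two clauses
  have hfwd : ∀ j : ZMod n,
      ((∃ t : ℕ, t ≤ h ∧ i = (t : ZMod n)) ∧ j = i + (h : ZMod n)) ↔
        (i.val ≤ h ∧ j = i + (h : ZMod n)) := by
    intro j
    rw [specials_spec_iff hn h3]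
  have hbwd : ∀ j : ZMod n,
      ((∃ t : ℕ, t ≤ h ∧ j = (t : ZMod n)) ∧ i = j + (h : ZMod n)) ↔
        (h ≤ i.val ∧ j = i - (h : ZMod n)) := by
    intro j
    rw [specials_spec_iff hn h3]
    constructor
    · rintro ⟨hjval, hij⟩
      have hj : j = i - (h : ZMod n) := by rw [hij]; ring
      refine ⟨?_, hj⟩
      rw [hj, hB] at hjval
      split_ifs at hjval <;> omega
    · rintro ⟨hiv, rfl⟩
      refine ⟨?_, by ring⟩
      rw [hB, if_neg (by omega)]
      omega
  ext j
  rw [mem_neighborSet, specials, fromRel_adj]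
  constructor
  · rintro ⟨hne, hcl | hcl⟩
    · obtain ⟨hiv, rfl⟩ := (hfwd j).mp hcl
      split_ifs with h1 h2
      · rfl
      · exact Set.mem_insert _ _
      · omega
    · obtain ⟨hiv, rfl⟩ := (hbwd j).mp hcl
      split_ifs with h1 h2
      · omega
      · exact Set.mem_insert_iff.mpr (Or.inr rfl)
      · rfl
  · intro hj
    split_ifs at hj with h1 h2
    · rcases hj with rfl
      exact ⟨hne1, Or.inl ((hfwd _).mpr ⟨by omega, rfl⟩)⟩
    · rcases hj with rfl | rfl
      · exact ⟨hne1, Or.inl ((hfwd _).mpr ⟨by omega, rfl⟩)⟩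
      · exact ⟨hne2, Or.inr ((hbwd _).mpr ⟨by omega, rfl⟩)⟩
    · rcases hj with rfl
      exact ⟨hne2, Or.inr ((hbwd _).mpr ⟨by omega, rfl⟩)⟩

lemma specials_degree (hn : n % 2 = 1) (h3 : 3 ≤ n) (i : ZMod n) :
    ((specials n).neighborSet i).ncard =
      if i = (((n - 1) / 2 : ℕ) : ZMod n) then 2 else 1 := by
  set h : ℕ := (n - 1) / 2 with hh
  have hpos : 0 < h := by omega
  have hv := ZMod.val_lt i
  have hival : i = ((h : ℕ) : ZMod n) ↔ i.val = h := by
    constructor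
    · rintro rfl; exact ZMod.val_natCast_of_lt (by omega)
    · intro hq; rw [← hq, natCast_val_eq]
  rw [specials_neighborSet hn h3]
  by_cases hc : i.val = h
  · rw [if_neg (by omega), if_pos hc, if_pos (hival.mpr hc)]
    refine Set.ncard_pair ?_
    intro hq
    have := congrArg ZMod.val hq
    rw [val_add_cast i (by omega : h < n), val_sub_cast i hpos (by omega : h < n)] at this
    split_ifs at this <;> omega
  · rw [if_neg (fun hq => hc (hival.mp hq))]
    split_ifs <;> simp

lemma specials_le_harary {m : ℕ} (hm : m % 2 = 1) (hn : n % 2 = 1) :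
    specials n ≤ harary m n := by
  intro i j hadj
  rw [specials, fromRel_adj] at hadj
  rw [harary, fromRel_adj]
  obtain ⟨hne, h | h⟩ := hadj
  · exact ⟨hne, Or.inl (Or.inr (Or.inr ⟨hm, hn, h.1, h.2⟩))⟩
  · exact ⟨hne, Or.inr (Or.inr (Or.inr ⟨hm, hn, h.1, h.2⟩))⟩

end specialsec

section constructions
variable {n : ℕ} [NeZero n]
set_option linter.unusedSectionVars false

lemma neighborSet_sup {α : Type*} (G1 G2 : SimpleGraph α) (x : α) :
    (G1 ⊔ G2).neighborSet x = G1.neighborSet x ∪ G2.neighborSet x := by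
  ext y; simp [mem_neighborSet, sup_adj]

lemma cycDist_add_small (i : ZMod n) {c : ℕ} (h1 : 0 < c) (h2 : 2 * c ≤ n) :
    cycDist n i (i + (c : ZMod n)) = c := by
  rw [cycDist_add_cast i h1 (by omega)]; omega

lemma cycDist_sub_small (i : ZMod n) {c : ℕ} (h1 : 0 < c) (h2 : 2 * c ≤ n) :
    cycDist n i (i - (c : ZMod n)) = c := by
  rw [sub_cast_eq i (by omega : c ≤ n)]
  rcases Nat.eq_or_lt_of_le h2 with he | hlt
  · have : n - c = c := by omega
    rw [this, cycDist_add_small i h1 h2]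
  · rw [cycDist_add_cast i (by omega) (by omega)]
    omega

lemma cycDist_one (h2 : 2 ≤ n) (i : ZMod n) : cycDist n i (i + 1) = 1 := by
  rw [one_eq_cast]
  exact cycDist_add_small i (by omega) (by omega)

lemma cycDist_sub_one (h2 : 2 ≤ n) (i : ZMod n) : cycDist n i (i - 1) = 1 := by
  rw [one_eq_cast]
  exact cycDist_sub_small i (by omega) (by omega)

lemma matchOne_le_harary {m : ℕ} (hm : 2 ≤ m) (hmn : m < n) (hn : n % 2 = 0) :
    matchOne n ≤ harary m n := by
  have h2 : 2 ≤ n := by omega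
  intro i j hadj
  rw [matchOne, fromRel_adj] at hadj
  rw [harary, fromRel_adj]
  obtain ⟨hne, h⟩ := hadj
  refine ⟨hne, Or.inl (Or.inl ?_)⟩
  have hd : cycDist n i j = 1 := by
    rcases h with ⟨-, rfl⟩ | ⟨-, rfl⟩
    · exact cycDist_one h2 i
    · rw [cycDist_comm]; exact cycDist_one h2 j
  rw [hd]; omega

/-- Case A : `k` even -/
lemma degA {k : ℕ} (hk : 2 ≤ k) (hkn : k < n) (hke : k % 2 = 0) (i : ZMod n) :
    ((circSub n 1 (k / 2)).neighborSet i).ncard = k := by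
  rw [circSub_degree le_rfl (by omega)]
  omega

/-- Case B : `k` odd, `n` even -/
lemma degB {k : ℕ} (hk : 3 ≤ k) (hkn : k < n) (hke : k % 2 = 1) (hne : n % 2 = 0) (i : ZMod n) :
    (((circSub n 1 ((k - 1) / 2) ⊔ diamMatch n)).neighborSet i).ncard = k := by
  have h2 : 2 ≤ n := by omega
  rw [_root_.neighborSet_sup]
  have hdisj : Disjoint ((circSub n 1 ((k - 1) / 2)).neighborSet i)
      ((diamMatch n).neighborSet i) := by
    rw [diamMatch_neighborSet hne, Set.disjoint_right]
    rintro y rfl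
    apply not_mem_circSub_nbr le_rfl
    rw [cycDist_add_small i (by omega) (by omega)]
    omega
  rw [Set.ncard_union_eq hdisj (Set.toFinite _) (Set.toFinite _),
    circSub_degree le_rfl (by omega), diamMatch_degree hne]
  omega

/-- Case C : `k` odd, `n` even, `k < m` -/
lemma degC {k : ℕ} (hk : 3 ≤ k) (hkn : k + 1 < n) (hke : k % 2 = 1) (hne : n % 2 = 0)
    (i : ZMod n) :
    (((circSub n 2 ((k + 1) / 2) ⊔ matchOne n)).neighborSet i).ncard = k := by
  have h2 : 2 ≤ n := by omega
  rw [_root_.neighborSet_sup]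
  have hdisj : Disjoint ((circSub n 2 ((k + 1) / 2)).neighborSet i)
      ((matchOne n).neighborSet i) := by
    rw [Set.disjoint_right]
    intro y hy
    rcases Nat.even_or_odd i.val with hpar | hpar
    · rw [matchOne_neighborSet_even hne (Nat.even_iff.mp hpar)] at hy
      rcases hy with rfl
      apply not_mem_circSub_nbr (by omega)
      rw [cycDist_one h2]
      omega
    · rw [matchOne_neighborSet_odd hne (Nat.odd_iff.mp hpar)] at hy
      rcases hy with rfl
      apply not_mem_circSub_nbr (by omega)
      rw [cycDist_sub_one h2]
      omega
  rw [Set.ncard_union_eq hdisj (Set.toFinite _) (Set.toFinite _),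
    circSub_degree (by omega) (by omega), matchOne_degree hne]
  omega

/-- Case D : `k` odd, `n` odd, `k < m` -/
lemma degD {k : ℕ} (hk : 3 ≤ k) (hkn : k + 1 < n) (hke : k % 2 = 1) (hno : n % 2 = 1)
    (i : ZMod n) :
    (((circSub n 2 ((k + 1) / 2) ⊔ gadgetOne n)).neighborSet i).ncard =
      if i = 0 then k + 1 else k := by
  have h3 : 3 ≤ n := by omega
  have h2 : 2 ≤ n := by omega
  rw [_root_.neighborSet_sup]
  have hdisj : Disjoint ((circSub n 2 ((k + 1) / 2)).neighborSet i)
      ((gadgetOne n).neighborSet i) := by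
    rw [gadgetOne_neighborSet hno h3, Set.disjoint_right]
    intro y hy
    have hy' : y = i + 1 ∨ y = i - 1 := by
      split_ifs at hy
      · rcases hy with rfl | rfl
        · exact Or.inl rfl
        · exact Or.inr rfl
      · exact Or.inr hy
      · exact Or.inl hy
    rcases hy' with rfl | rfl
    · apply not_mem_circSub_nbr (by omega)
      rw [cycDist_one h2]; omega
    · apply not_mem_circSub_nbr (by omega)
      rw [cycDist_sub_one h2]; omega
  rw [Set.ncard_union_eq hdisj (Set.toFinite _) (Set.toFinite _),
    circSub_degree (by omega) (by omega), gadgetOne_degree hno h3]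
  split_ifs <;> omega

/-- Case E : `k = m` odd, `n` odd -/
lemma degE {m : ℕ} (hm : 3 ≤ m) (hmn : m < n) (hme : m % 2 = 1) (hno : n % 2 = 1)
    (i : ZMod n) :
    (((circSub n 1 ((m - 1) / 2) ⊔ specials n)).neighborSet i).ncard =
      if i = (((n - 1) / 2 : ℕ) : ZMod n) then m + 1 else m := by
  have h3 : 3 ≤ n := by omega
  rw [_root_.neighborSet_sup]
  have hdisj : Disjoint ((circSub n 1 ((m - 1) / 2)).neighborSet i)
      ((specials n).neighborSet i) := by
    rw [specials_neighborSet hno h3, Set.disjoint_right]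
    intro y hy
    have hy' : y = i + (((n - 1) / 2 : ℕ) : ZMod n) ∨ y = i - (((n - 1) / 2 : ℕ) : ZMod n) := by
      split_ifs at hy
      · exact Or.inl hy
      · rcases hy with rfl | rfl
        · exact Or.inl rfl
        · exact Or.inr rfl
      · exact Or.inr hy
    have hmn2 : m ≤ n - 2 := by omega
    rcases hy' with rfl | rfl
    · apply not_mem_circSub_nbr le_rfl
      rw [cycDist_add_small i (by omega) (by omega)]
      omega
    · apply not_mem_circSub_nbr le_rfl
      rw [cycDist_sub_small i (by omega) (by omega)]
      omega
  rw [Set.ncard_union_eq hdisj (Set.toFinite _) (Set.toFinite _),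
    circSub_degree le_rfl (by omega), specials_degree hno h3]
  split_ifs <;> omega

end constructions

section assembly
variable {n : ℕ} [NeZero n]
set_option linter.unusedSectionVars false

lemma ktdn_eq {W : Type*} (H : SimpleGraph W) (k v : ℕ)
    (hmem : ∃ S : Set W, IsKTDS H k S ∧ S.ncard = v)
    (hlow : ∀ S : Set W, IsKTDS H k S → v ≤ S.ncard) : ktdn H k = v := by
  refine le_antisymm (Nat.sInf_le hmem) (le_csInf ⟨v, hmem⟩ ?_)
  rintro b ⟨S, h1, rfl⟩
  exact hlow S h1

lemma circSub_pairwise_disjoint {a b : ℕ} (ha : 1 ≤ a) (hb : 1 ≤ b) (hab : a ≠ b) :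
    Disjoint (circSub n a a) (circSub n b b) := by
  rw [disjoint_iff]
  ext x y
  simp only [inf_adj, bot_adj, iff_false, not_and]
  intro h1 h2
  rw [circSub_adj ha] at h1
  rw [circSub_adj hb] at h2
  omega

lemma harary_KHLD {m : ℕ} (hm : 2 ≤ m) (hmn : m < n) : IsKHLD (harary m n) (m / 2) := by
  refine ⟨fun i => circSub n (i.val + 1) (i.val + 1), fun i => ?_, fun i j hij => ?_⟩
  · have hi := i.isLt
    constructor
    · exact circSub_le_harary (by omega) (by omega)
    · intro v
      rw [circSub_degree (by omega) (by omega)]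
      omega
  · refine circSub_pairwise_disjoint (by omega) (by omega) ?_
    intro h
    exact hij (Fin.ext (by omega))

lemma nbr_ncard_mono [Fintype (ZMod n)] {G1 G2 : SimpleGraph (ZMod n)} (h : G1 ≤ G2) (x : ZMod n) :
    ((G1.neighborSet x).ncard) ≤ (G2.neighborSet x).ncard :=
  Set.ncard_le_ncard (fun y hy => h hy) (Set.toFinite _)

lemma harary_mindeg {m : ℕ} (hm : 2 ≤ m) (hmn : m < n) (x : ZMod n) :
    m ≤ ((harary m n).neighborSet x).ncard := by
  rcases Nat.even_or_odd m with hme | hmo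
  · have hme' := Nat.even_iff.mp hme
    have h1 : circSub n 1 (m / 2) ≤ harary m n := circSub_le_harary le_rfl le_rfl
    have := nbr_ncard_mono h1 x
    rw [degA hm hmn hme' x] at this
    exact this
  · have hmo' := Nat.odd_iff.mp hmo
    have hm3 : 3 ≤ m := by omega
    rcases Nat.even_or_odd n with hne | hno
    · have hne' := Nat.even_iff.mp hne
      have h1 : circSub n 1 ((m - 1) / 2) ⊔ diamMatch n ≤ harary m n :=
        sup_le (circSub_le_harary le_rfl (by omega)) (diamMatch_le_harary hmo' hne')
      have := nbr_ncard_mono h1 x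
      rw [degB hm3 hmn hmo' hne' x] at this
      exact this
    · have hno' := Nat.odd_iff.mp hno
      have h1 : circSub n 1 ((m - 1) / 2) ⊔ specials n ≤ harary m n :=
        sup_le (circSub_le_harary le_rfl (by omega)) (specials_le_harary hmo' hno')
      have := nbr_ncard_mono h1 x
      rw [degE hm3 hmn hmo' hno' x] at this
      split_ifs at this <;> omega

lemma ktdn_harary_kfactor {m k : ℕ} (hk : 2 ≤ k) (hkm : k ≤ m) (hm : 2 ≤ m) (hmn : m < n)
    (H : SimpleGraph (ZMod n)) (hle : H ≤ harary m n)
    (hdeg : ∀ x : ZMod n, (H.neighborSet x).ncard = k) :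
    ktdn (inflation (harary m n)) k = n * k := by
  classical
  haveI : Fintype (harary m n).Dart := SimpleGraph.Dart.fintype
  have hcard : Fintype.card (ZMod n) = n := ZMod.card n
  have hgd : ∀ x : ZMod n, k ≤ ((harary m n).neighborSet x).ncard :=
    fun x => le_trans hkm (harary_mindeg hm hmn x)
  refine ktdn_eq _ k (n * k) ?_ ?_
  · refine ⟨dartsOf (harary m n) H, upper_ktds k H hle (fun x => le_of_eq (hdeg x).symm), ?_⟩
    rw [dartsOf_ncard H hle]
    rw [Finset.sum_congr rfl (fun x _ => hdeg x), Finset.sum_const, Finset.card_univ, hcard,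
      smul_eq_mul]
  · intro S hS
    have := lower_bound k hk hgd S hS
    rwa [hcard] at this

lemma ktdn_harary_nearfactor {m k : ℕ} (hk : 2 ≤ k) (hkm : k ≤ m) (hm : 2 ≤ m) (hmn : m < n)
    (hodd : Odd (n * k)) (x0 : ZMod n)
    (H : SimpleGraph (ZMod n)) (hle : H ≤ harary m n)
    (hdeg : ∀ x : ZMod n, (H.neighborSet x).ncard = if x = x0 then k + 1 else k) :
    ktdn (inflation (harary m n)) k = n * k + 1 := by
  classical
  haveI : Fintype (harary m n).Dart := SimpleGraph.Dart.fintype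
  have hcard : Fintype.card (ZMod n) = n := ZMod.card n
  have hgd : ∀ x : ZMod n, k ≤ ((harary m n).neighborSet x).ncard :=
    fun x => le_trans hkm (harary_mindeg hm hmn x)
  refine ktdn_eq _ k (n * k + 1) ?_ ?_
  · refine ⟨dartsOf (harary m n) H, upper_ktds k H hle
      (fun x => by rw [hdeg x]; split_ifs <;> omega), ?_⟩
    rw [dartsOf_ncard H hle, Finset.sum_congr rfl (fun x _ => hdeg x)]
    have hsplit : ∀ x : ZMod n, (if x = x0 then k + 1 else k) = k + (if x = x0 then 1 else 0) := by
      intro x; split_ifs <;> omega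
    rw [Finset.sum_congr rfl (fun x _ => hsplit x), Finset.sum_add_distrib, Finset.sum_const,
      Finset.card_univ, hcard, smul_eq_mul, Finset.sum_ite_eq' Finset.univ x0 (fun _ => 1),
      if_pos (Finset.mem_univ x0)]
  · intro S hS
    have := lower_bound_odd k hk hgd (by rwa [hcard]) S hS
    rwa [hcard] at this

end assembly

/-- **Proposition (Harary graphs).** For `2 ≤ k ≤ m < n`, the Harary graph `H_{m,n}` is a
`⌊m/2⌋`-Hamiltonian-like decomposable graph, and `γ_{×k,t}((H_{m,n})_I) = nk + 1` if `k`
and `n` are both odd, and `= nk` otherwise. -/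
theorem stmt15 (m n k : ℕ) (hk : 2 ≤ k) (hkm : k ≤ m) (hmn : m < n) :
    IsKHLD (harary m n) (m / 2) ∧
    (Odd k ∧ Odd n → ktdn (inflation (harary m n)) k = n * k + 1) ∧
    (¬ (Odd k ∧ Odd n) → ktdn (inflation (harary m n)) k = n * k) := by
  haveI : NeZero n := ⟨by omega⟩
  have hm2 : 2 ≤ m := le_trans hk hkm
  refine ⟨harary_KHLD hm2 hmn, ?_, ?_⟩
  · rintro ⟨hko, hno⟩
    have hko' := Nat.odd_iff.mp hko
    have hno' := Nat.odd_iff.mp hno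
    have hodd : Odd (n * k) := hno.mul hko
    rcases eq_or_lt_of_le hkm with rfl | hlt
    · refine ktdn_harary_nearfactor hk hkm hm2 hmn hodd _ _ ?_
        (degE (by omega) hmn hko' hno')
      exact sup_le (circSub_le_harary le_rfl (by omega)) (specials_le_harary hko' hno')
    · refine ktdn_harary_nearfactor hk hkm hm2 hmn hodd 0 _ ?_
        (degD (by omega) (by omega) hko' hno')
      exact sup_le (circSub_le_harary (by omega) (by omega))
        (gadgetOne_le_harary hm2 hmn hno' (by omega))
  · intro hnot
    rcases Nat.even_or_odd k with hke | hko
    · have hke' := Nat.even_iff.mp hke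
      refine ktdn_harary_kfactor hk hkm hm2 hmn _ ?_ (degA hk (by omega) hke')
      exact circSub_le_harary le_rfl (by omega)
    · have hko' := Nat.odd_iff.mp hko
      have hne : n % 2 = 0 := by
        rcases Nat.even_or_odd n with h | h
        · exact Nat.even_iff.mp h
        · exact absurd ⟨hko, h⟩ hnot
      rcases Nat.even_or_odd m with hme | hmo
      · have hme' := Nat.even_iff.mp hme
        have hlt : k < m := by omega
        refine ktdn_harary_kfactor hk hkm hm2 hmn _ ?_ (degC (by omega) (by omega) hko' hne)
        exact sup_le (circSub_le_harary (by omega) (by omega))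
          (matchOne_le_harary hm2 hmn hne)
      · have hmo' := Nat.odd_iff.mp hmo
        refine ktdn_harary_kfactor hk hkm hm2 hmn _ ?_ (degB (by omega) (by omega) hko' hne)
        exact sup_le (circSub_le_harary le_rfl (by omega)) (diamMatch_le_harary hmo' hne)
end

section
/- Let p ≥ k ≥ 2 be integers and let G be the complete bipartite graph K_{p,p}. Then G is a (⌊p/2⌋ − 1)-HLPM-graph if p is even, and G is a ⌊p/2⌋-Hamiltonian-like decomposable graph if p is odd; consequently γ_{×k,t}(G_I) = 2pk. -/
open SimpleGraph

open Sum

section Stmt16Aux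

variable {p : ℕ}

private abbrev KB (p : ℕ) : SimpleGraph (Fin p ⊕ Fin p) :=
  completeBipartiteGraph (Fin p) (Fin p)

private def fz {p : ℕ} (i : Fin p) : ZMod p := (i.val : ZMod p)

private def zf {p : ℕ} [NeZero p] (x : ZMod p) : Fin p := ⟨x.val, ZMod.val_lt x⟩

private lemma fz_zf [NeZero p] (x : ZMod p) : fz (zf x) = x :=
  ZMod.natCast_rightInverse x

private lemma fz_inj [NeZero p] : Function.Injective (fz : Fin p → ZMod p) := by
  intro i j h
  have h2 : (fz i).val = (fz j).val := by rw [h]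
  rwa [fz, fz, ZMod.val_cast_of_lt i.isLt, ZMod.val_cast_of_lt j.isLt, ← Fin.ext_iff] at h2

private lemma zf_inj [NeZero p] : Function.Injective (zf : ZMod p → Fin p) := by
  intro x y h
  rw [← fz_zf x, ← fz_zf y, h]

private lemma zf_fz [NeZero p] (i : Fin p) : zf (fz i) = i := fz_inj (fz_zf _)

private lemma zcast_inj {t t' : ℕ} (ht : t < p) (ht' : t' < p)
    (h : (t : ZMod p) = (t' : ZMod p)) : t = t' := by
  rw [← ZMod.val_cast_of_lt ht, ← ZMod.val_cast_of_lt ht', h]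

private def Mg (p c : ℕ) : SimpleGraph (Fin p ⊕ Fin p) :=
  SimpleGraph.fromRel (fun a b => match a, b with
    | inl i, inr j => fz j = fz i + (c : ZMod p)
    | _, _ => False)

private lemma Mg_adj {c : ℕ} {a b : Fin p ⊕ Fin p} : (Mg p c).Adj a b ↔
    (∃ i j : Fin p, fz j = fz i + (c : ZMod p) ∧
      ((a = inl i ∧ b = inr j) ∨ (a = inr j ∧ b = inl i))) := by
  unfold Mg
  rw [SimpleGraph.fromRel_adj]
  cases a <;> cases b <;> aesop

private lemma Mg_le {c : ℕ} : Mg p c ≤ KB p := by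
  intro a b h
  rw [Mg_adj] at h
  obtain ⟨i, j, -, (⟨rfl, rfl⟩ | ⟨rfl, rfl⟩)⟩ := h <;> simp

private lemma Mg_nbr_inl [NeZero p] {c : ℕ} (i : Fin p) :
    (Mg p c).neighborSet (inl i) = {inr (zf (fz i + (c : ZMod p)))} := by
  ext b
  rw [mem_neighborSet, Mg_adj]
  constructor
  · rintro ⟨i', j', hc, (⟨hi, rfl⟩ | ⟨hi, -⟩)⟩
    · obtain rfl : i = i' := by simpa using hi
      have : zf (fz j') = zf (fz i + (c : ZMod p)) := by rw [hc]
      rw [zf_fz] at this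
      simp [this]
    · simp at hi
  · rintro rfl
    exact ⟨i, _, by rw [fz_zf], Or.inl ⟨rfl, rfl⟩⟩

private lemma Mg_nbr_inr [NeZero p] {c : ℕ} (j : Fin p) :
    (Mg p c).neighborSet (inr j) = {inl (zf (fz j - (c : ZMod p)))} := by
  ext b
  rw [mem_neighborSet, Mg_adj]
  constructor
  · rintro ⟨i', j', hc, (⟨hj, -⟩ | ⟨hj, rfl⟩)⟩
    · simp at hj
    · obtain rfl : j = j' := by simpa using hj
      have : fz i' = fz j - (c : ZMod p) := by rw [hc]; ring
      have h2 : zf (fz i') = zf (fz j - (c : ZMod p)) := by rw [this]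
      rw [zf_fz] at h2
      simp [h2]
  · rintro rfl
    refine ⟨_, j, ?_, Or.inr ⟨rfl, rfl⟩⟩
    rw [fz_zf]; ring

private lemma Mg_disj {c e : ℕ} (h : (c : ZMod p) ≠ (e : ZMod p)) :
    Disjoint (Mg p c) (Mg p e) := by
  rw [disjoint_iff]
  ext a b
  simp only [SimpleGraph.inf_adj, SimpleGraph.bot_adj, iff_false, not_and]
  intro h1 h2
  rw [Mg_adj] at h1 h2
  apply h
  obtain ⟨i, j, hc, hab⟩ := h1
  obtain ⟨i', j', he, hab'⟩ := h2
  have hij : i = i' ∧ j = j' := by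
    rcases hab with ⟨rfl, rfl⟩ | ⟨rfl, rfl⟩ <;>
      rcases hab' with ⟨h1', h2'⟩ | ⟨h1', h2'⟩ <;> simp_all
  obtain ⟨rfl, rfl⟩ := hij
  rw [hc] at he
  exact add_left_cancel he

private lemma nbr_sup {V : Type*} (G H : SimpleGraph V) (v : V) :
    (G ⊔ H).neighborSet v = G.neighborSet v ∪ H.neighborSet v := by
  ext w; simp [mem_neighborSet, SimpleGraph.sup_adj]

private lemma Mg_pm [NeZero p] (c : ℕ) : IsPerfectMatchingGraph (KB p) (Mg p c) := by
  refine ⟨Mg_le, fun v => ?_⟩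
  cases v with
  | inl i => rw [Mg_nbr_inl]; exact Set.ncard_singleton _
  | inr j => rw [Mg_nbr_inr]; exact Set.ncard_singleton _

private lemma Fg_two_factor (hp : 1 < p) (c : ℕ) :
    IsTwoFactor (KB p) (Mg p (2 * c) ⊔ Mg p (2 * c + 1)) := by
  haveI : NeZero p := ⟨by omega⟩
  haveI : Fact (1 < p) := ⟨hp⟩
  have hne : ((2 * c : ℕ) : ZMod p) ≠ ((2 * c + 1 : ℕ) : ZMod p) := by
    push_cast
    intro h
    exact one_ne_zero (left_eq_add.mp h)
  refine ⟨sup_le Mg_le Mg_le, fun v => ?_⟩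
  cases v with
  | inl i =>
    rw [nbr_sup, Mg_nbr_inl, Mg_nbr_inl, Set.singleton_union, Set.ncard_pair]
    intro h
    exact hne (add_left_cancel (zf_inj (inr_injective h)))
  | inr j =>
    rw [nbr_sup, Mg_nbr_inr, Mg_nbr_inr, Set.singleton_union, Set.ncard_pair]
    intro h
    exact hne (sub_right_injective (zf_inj (inl_injective h)))

private lemma cast_ne' {a b : ℕ} (ha : a < p) (hb : b < p) (h : a ≠ b) :
    (a : ZMod p) ≠ (b : ZMod p) := fun he => h (zcast_inj ha hb he)

private lemma disj_FF (hp : 0 < p) {a b c d : ℕ} (ha : a < p) (hb : b < p) (hc : c < p)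
    (hd : d < p) (h1 : a ≠ c) (h2 : a ≠ d) (h3 : b ≠ c) (h4 : b ≠ d) :
    Disjoint (Mg p a ⊔ Mg p b) (Mg p c ⊔ Mg p d) := by
  rw [disjoint_sup_left, disjoint_sup_right, disjoint_sup_right]
  exact ⟨⟨Mg_disj (cast_ne' ha hc h1), Mg_disj (cast_ne' ha hd h2)⟩,
    ⟨Mg_disj (cast_ne' hb hc h3), Mg_disj (cast_ne' hb hd h4)⟩⟩

private lemma even_case (hp2 : 2 ≤ p) (hpe : p % 2 = 0) : IsKHLPM (KB p) (p / 2 - 1) := by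
  haveI : NeZero p := ⟨by omega⟩
  refine ⟨fun t => Mg p (2 * t.val) ⊔ Mg p (2 * t.val + 1), Mg p (p - 1),
    fun t => Fg_two_factor (by omega) _, ?_, Mg_pm _, ?_⟩
  · intro i j hij
    have hi := i.isLt
    have hj := j.isLt
    have hne : i.val ≠ j.val := fun h => hij (Fin.ext h)
    exact disj_FF (by omega) (by omega) (by omega) (by omega) (by omega)
      (by omega) (by omega) (by omega) (by omega)
  · intro i
    have hi := i.isLt
    rw [disjoint_sup_right]
    exact ⟨Mg_disj (cast_ne' (by omega) (by omega) (by omega)),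
      Mg_disj (cast_ne' (by omega) (by omega) (by omega))⟩

private lemma odd_case (hp2 : 2 ≤ p) (hpo : p % 2 = 1) : IsKHLD (KB p) (p / 2) := by
  haveI : NeZero p := ⟨by omega⟩
  refine ⟨fun t => Mg p (2 * t.val) ⊔ Mg p (2 * t.val + 1),
    fun t => Fg_two_factor (by omega) _, ?_⟩
  intro i j hij
  have hi := i.isLt
  have hj := j.isLt
  have hne : i.val ≠ j.val := fun h => hij (Fin.ext h)
  exact disj_FF (by omega) (by omega) (by omega) (by omega) (by omega)
    (by omega) (by omega) (by omega) (by omega)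

private def dL (p : ℕ) (i j : Fin p) : (KB p).Dart := ⟨(inl i, inr j), by simp⟩
private def dR (p : ℕ) (i j : Fin p) : (KB p).Dart := ⟨(inr j, inl i), by simp⟩

private lemma dL_inj {i j i' j' : Fin p} : dL p i j = dL p i' j' ↔ i = i' ∧ j = j' := by
  simp [dL, SimpleGraph.Dart.ext_iff, Prod.ext_iff]

private lemma dR_inj {i j i' j' : Fin p} : dR p i j = dR p i' j' ↔ i = i' ∧ j = j' := by
  simp [dR, SimpleGraph.Dart.ext_iff, Prod.ext_iff, and_comm]

private lemma dL_ne_dR {i j i' j' : Fin p} : dL p i j ≠ dR p i' j' := by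
  simp [dL, dR, SimpleGraph.Dart.ext_iff, Prod.ext_iff]

private lemma dart_cases (d : (KB p).Dart) :
    (∃ i j, d = dL p i j) ∨ (∃ i j, d = dR p i j) := by
  obtain ⟨⟨a, b⟩, h⟩ := d
  cases a with
  | inl i =>
    cases b with
    | inl i' => simp at h
    | inr j => exact Or.inl ⟨i, j, rfl⟩
  | inr j =>
    cases b with
    | inl i => exact Or.inr ⟨i, j, rfl⟩
    | inr j' => simp at h

private lemma infl_adj {V : Type*} {G : SimpleGraph V} {d₁ d₂ : G.Dart} :
    (inflation G).Adj d₁ d₂ ↔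
      d₁ ≠ d₂ ∧ (d₁.toProd.1 = d₂.toProd.1 ∨ d₂.toProd = d₁.toProd.swap) := by
  unfold inflation
  rw [SimpleGraph.fromRel_adj]
  constructor
  · rintro ⟨hne, (h | h) | (h | h)⟩
    · exact ⟨hne, Or.inl h⟩
    · exact ⟨hne, Or.inr (by rw [h, Prod.swap_swap])⟩
    · exact ⟨hne, Or.inl h.symm⟩
    · exact ⟨hne, Or.inr h⟩
  · rintro ⟨hne, h | h⟩
    · exact ⟨hne, Or.inl (Or.inl h)⟩
    · exact ⟨hne, Or.inr (Or.inr h)⟩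

private lemma nbr_dL {i j : Fin p} {d : (KB p).Dart} :
    d ∈ (inflation (KB p)).neighborSet (dL p i j) ↔
      (∃ j', j' ≠ j ∧ d = dL p i j') ∨ d = dR p i j := by
  rw [mem_neighborSet, infl_adj]
  constructor
  · rintro ⟨hne, h⟩
    rcases dart_cases d with ⟨i', j', rfl⟩ | ⟨i', j', rfl⟩
    · rcases h with h | h
      · obtain rfl : i = i' := by simpa [dL] using h
        exact Or.inl ⟨j', fun hj => hne (by rw [hj]), rfl⟩
      · exact absurd h (by simp [dL, dR, Prod.ext_iff])
    · rcases h with h | h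
      · exact absurd h (by simp [dL, dR])
      · obtain ⟨rfl, rfl⟩ : j' = j ∧ i' = i := by simpa [dL, dR, Prod.ext_iff] using h
        exact Or.inr rfl
  · rintro (⟨j', hj, rfl⟩ | rfl)
    · exact ⟨fun h => hj (dL_inj.mp h.symm).2, Or.inl rfl⟩
    · exact ⟨dL_ne_dR.symm ∘ Eq.symm, Or.inr (by simp [dL, dR])⟩

private lemma nbr_dR {i j : Fin p} {d : (KB p).Dart} :
    d ∈ (inflation (KB p)).neighborSet (dR p i j) ↔
      (∃ i', i' ≠ i ∧ d = dR p i' j) ∨ d = dL p i j := by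
  rw [mem_neighborSet, infl_adj]
  constructor
  · rintro ⟨hne, h⟩
    rcases dart_cases d with ⟨i', j', rfl⟩ | ⟨i', j', rfl⟩
    · rcases h with h | h
      · exact absurd h (by simp [dL, dR])
      · obtain ⟨rfl, rfl⟩ : i' = i ∧ j' = j := by simpa [dL, dR, Prod.ext_iff] using h
        exact Or.inr rfl
    · rcases h with h | h
      · obtain rfl : j = j' := by simpa [dR] using h
        exact Or.inl ⟨i', fun hi => hne (by rw [hi]), rfl⟩
      · exact absurd h (by simp [dL, dR, Prod.ext_iff])
  · rintro (⟨i', hi, rfl⟩ | rfl)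
    · exact ⟨fun h => hi (dR_inj.mp h.symm).1, Or.inl rfl⟩
    · exact ⟨fun h => dL_ne_dR h.symm, Or.inr (by simp [dL, dR])⟩

private instance dartFinite : Finite ((KB p).Dart) :=
  Finite.of_injective (fun d => d.toProd) SimpleGraph.Dart.toProd_injective

private lemma nbr_ncard_le (hp : 0 < p) (d : (KB p).Dart) :
    ((inflation (KB p)).neighborSet d).ncard ≤ p := by
  haveI : NeZero p := ⟨hp.ne'⟩
  have hcompl : ∀ x : Fin p, ({x}ᶜ : Set (Fin p)).ncard = p - 1 := by
    intro x
    have h := Set.ncard_add_ncard_compl ({x} : Set (Fin p))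
    rw [Set.ncard_singleton, Nat.card_eq_fintype_card, Fintype.card_fin] at h
    omega
  rcases dart_cases d with ⟨i, j, rfl⟩ | ⟨i, j, rfl⟩
  · have hN : (inflation (KB p)).neighborSet (dL p i j)
        = insert (dR p i j) ((fun j' => dL p i j') '' ({j}ᶜ)) := by
      ext d'
      rw [nbr_dL]
      simp only [Set.mem_insert_iff, Set.mem_image, Set.mem_compl_iff,
        Set.mem_singleton_iff]
      constructor
      · rintro (⟨j', hj, rfl⟩ | rfl)
        · exact Or.inr ⟨j', hj, rfl⟩
        · exact Or.inl rfl
      · rintro (rfl | ⟨x, hx, rfl⟩)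
        · exact Or.inr rfl
        · exact Or.inl ⟨x, hx, rfl⟩
    rw [hN]
    calc (insert (dR p i j) ((fun j' => dL p i j') '' ({j}ᶜ))).ncard
        ≤ ((fun j' => dL p i j') '' ({j}ᶜ)).ncard + 1 := Set.ncard_insert_le _ _
      _ ≤ ({j}ᶜ : Set (Fin p)).ncard + 1 :=
          Nat.add_le_add_right (Set.ncard_image_le (Set.toFinite _)) 1
      _ = p := by rw [hcompl]; omega
  · have hN : (inflation (KB p)).neighborSet (dR p i j)
        = insert (dL p i j) ((fun i' => dR p i' j) '' ({i}ᶜ)) := by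
      ext d'
      rw [nbr_dR]
      simp only [Set.mem_insert_iff, Set.mem_image, Set.mem_compl_iff,
        Set.mem_singleton_iff]
      constructor
      · rintro (⟨i', hi, rfl⟩ | rfl)
        · exact Or.inr ⟨i', hi, rfl⟩
        · exact Or.inl rfl
      · rintro (rfl | ⟨x, hx, rfl⟩)
        · exact Or.inr rfl
        · exact Or.inl ⟨x, hx, rfl⟩
    rw [hN]
    calc (insert (dL p i j) ((fun i' => dR p i' j) '' ({i}ᶜ))).ncard
        ≤ ((fun i' => dR p i' j) '' ({i}ᶜ)).ncard + 1 := Set.ncard_insert_le _ _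
      _ ≤ ({i}ᶜ : Set (Fin p)).ncard + 1 :=
          Nat.add_le_add_right (Set.ncard_image_le (Set.toFinite _)) 1
      _ = p := by rw [hcompl]; omega

private lemma ktdn_lower (hp : 0 < p) {k : ℕ} {S : Set ((KB p).Dart)}
    (hS : IsKTDS (inflation (KB p)) k S) : 2 * p * k ≤ S.ncard := by
  classical
  haveI : Fintype ((KB p).Dart) := Fintype.ofFinite _
  set H := inflation (KB p) with hH
  have hcard : Fintype.card ((KB p).Dart) = 2 * p * p := by
    have hbij : Function.Bijective
        (Sum.elim (fun q : Fin p × Fin p => dL p q.1 q.2)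
                  (fun q : Fin p × Fin p => dR p q.1 q.2)) := by
      constructor
      · rintro (⟨i, j⟩ | ⟨i, j⟩) (⟨i', j'⟩ | ⟨i', j'⟩) h
        · obtain ⟨rfl, rfl⟩ := dL_inj.mp h; rfl
        · exact absurd h dL_ne_dR
        · exact absurd h.symm dL_ne_dR
        · obtain ⟨rfl, rfl⟩ := dR_inj.mp h; rfl
      · intro d
        rcases dart_cases d with ⟨i, j, rfl⟩ | ⟨i, j, rfl⟩
        exacts [⟨inl (i, j), rfl⟩, ⟨inr (i, j), rfl⟩]
    have h := Fintype.card_of_bijective hbij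
    simp only [Fintype.card_sum, Fintype.card_prod, Fintype.card_fin] at h
    rw [← h]; ring
  set Fs := S.toFinset with hFs
  have h1 : ∀ v : (KB p).Dart, (S ∩ H.neighborSet v).ncard
      = (Fs.filter (fun s => H.Adj v s)).card := by
    intro v
    rw [Set.ncard_eq_toFinset_card']
    congr 1
    ext d
    rw [Finset.mem_filter, hFs, Set.mem_toFinset, Set.mem_toFinset, Set.mem_inter_iff,
      SimpleGraph.mem_neighborSet]
  have h2 : ∑ v : (KB p).Dart, (Fs.filter (fun s => H.Adj v s)).card
      = ∑ s ∈ Fs, (Finset.univ.filter (fun v : (KB p).Dart => H.Adj s v)).card := by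
    calc ∑ v : (KB p).Dart, (Fs.filter (fun s => H.Adj v s)).card
        = ∑ v : (KB p).Dart, ∑ s ∈ Fs, if H.Adj v s then 1 else 0 :=
          Finset.sum_congr rfl fun v _ => Finset.card_filter _ _
      _ = ∑ s ∈ Fs, ∑ v : (KB p).Dart, if H.Adj v s then 1 else 0 := Finset.sum_comm
      _ = _ := by
          refine Finset.sum_congr rfl fun s _ => ?_
          rw [Finset.card_filter]
          exact Finset.sum_congr rfl fun v _ => by rw [SimpleGraph.adj_comm]
  have h3 : ∀ s : (KB p).Dart,
      (Finset.univ.filter (fun v : (KB p).Dart => H.Adj s v)).card ≤ p := by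
    intro s
    have he : (Finset.univ.filter (fun v : (KB p).Dart => H.Adj s v)).card
        = (H.neighborSet s).ncard := by
      rw [Set.ncard_eq_toFinset_card']
      congr 1
      ext d
      simp [Set.mem_toFinset, SimpleGraph.mem_neighborSet]
    rw [he]
    exact nbr_ncard_le hp s
  have hlow : Fintype.card ((KB p).Dart) * k
      ≤ ∑ v : (KB p).Dart, (S ∩ H.neighborSet v).ncard := by
    calc Fintype.card ((KB p).Dart) * k = ∑ _v : (KB p).Dart, k := by
          simp [Finset.sum_const, mul_comm]
      _ ≤ _ := Finset.sum_le_sum fun v _ => hS v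
  have hup : ∑ v : (KB p).Dart, (S ∩ H.neighborSet v).ncard ≤ Fs.card * p := by
    calc ∑ v : (KB p).Dart, (S ∩ H.neighborSet v).ncard
        = ∑ v : (KB p).Dart, (Fs.filter (fun s => H.Adj v s)).card :=
          Finset.sum_congr rfl fun v _ => h1 v
      _ = ∑ s ∈ Fs, (Finset.univ.filter (fun v : (KB p).Dart => H.Adj s v)).card := h2
      _ ≤ ∑ _s ∈ Fs, p := Finset.sum_le_sum fun s _ => h3 s
      _ = Fs.card * p := by simp [Finset.sum_const, mul_comm]
  have hchain : 2 * p * p * k ≤ Fs.card * p := by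
    rw [← hcard]
    exact le_trans hlow hup
  have hS' : S.ncard = Fs.card := Set.ncard_eq_toFinset_card' S
  rw [hS']
  have h5 : (2 * p * k) * p ≤ Fs.card * p := by
    calc (2 * p * k) * p = 2 * p * p * k := by ring
      _ ≤ Fs.card * p := hchain
  exact Nat.le_of_mul_le_mul_right h5 hp

private def SS (p k : ℕ) : Set ((KB p).Dart) :=
  {d | ∃ i j : Fin p, (fz j - fz i).val < k ∧ (d = dL p i j ∨ d = dR p i j)}

private lemma mem_SS_L [NeZero p] {k : ℕ} {i : Fin p} {t : ℕ} (ht : t < k) (htp : t < p) :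
    dL p i (zf (fz i + (t : ZMod p))) ∈ SS p k := by
  refine ⟨i, _, ?_, Or.inl rfl⟩
  rw [fz_zf, add_sub_cancel_left, ZMod.val_cast_of_lt htp]
  exact ht

private lemma mem_SS_R [NeZero p] {k : ℕ} {j : Fin p} {t : ℕ} (ht : t < k) (htp : t < p) :
    dR p (zf (fz j - (t : ZMod p))) j ∈ SS p k := by
  refine ⟨_, j, ?_, Or.inr rfl⟩
  rw [fz_zf, sub_sub_cancel, ZMod.val_cast_of_lt htp]
  exact ht

private lemma SS_ncard [NeZero p] {k : ℕ} (hk : k ≤ p) : (SS p k).ncard = 2 * p * k := by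
  classical
  set e : (Fin p × Fin k) ⊕ (Fin p × Fin k) → (KB p).Dart :=
    Sum.elim (fun q => dL p q.1 (zf (fz q.1 + (q.2.val : ZMod p))))
             (fun q => dR p (zf (fz q.1 - (q.2.val : ZMod p))) q.1) with he
  have hinj : Function.Injective e := by
    rintro (⟨i, t⟩ | ⟨j, t⟩) (⟨i', t'⟩ | ⟨j', t'⟩) h
    · obtain ⟨rfl, h2⟩ := dL_inj.mp h
      have := zcast_inj (lt_of_lt_of_le t.isLt hk) (lt_of_lt_of_le t'.isLt hk)
        (add_left_cancel (zf_inj h2))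
      rw [Fin.ext this]
    · exact absurd h dL_ne_dR
    · exact absurd h.symm dL_ne_dR
    · obtain ⟨h2, rfl⟩ := dR_inj.mp h
      have := zcast_inj (lt_of_lt_of_le t.isLt hk) (lt_of_lt_of_le t'.isLt hk)
        (sub_right_injective (zf_inj h2))
      rw [Fin.ext this]
  have hrange : Set.range e = SS p k := by
    apply Set.eq_of_subset_of_subset
    · rintro d ⟨q, rfl⟩
      rcases q with ⟨i, t⟩ | ⟨j, t⟩
      · exact mem_SS_L t.isLt (lt_of_lt_of_le t.isLt hk)
      · exact mem_SS_R t.isLt (lt_of_lt_of_le t.isLt hk)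
    · rintro d ⟨i, j, hlt, (rfl | rfl)⟩
      · refine ⟨inl (i, ⟨(fz j - fz i).val, hlt⟩), ?_⟩
        simp only [he, Sum.elim_inl]
        rw [dL_inj]
        refine ⟨rfl, ?_⟩
        rw [ZMod.natCast_rightInverse (fz j - fz i),
          show fz i + (fz j - fz i) = fz j by ring, zf_fz]
      · refine ⟨inr (j, ⟨(fz j - fz i).val, hlt⟩), ?_⟩
        simp only [he, Sum.elim_inr]
        rw [dR_inj]
        refine ⟨?_, rfl⟩
        rw [ZMod.natCast_rightInverse (fz j - fz i),
          show fz j - (fz j - fz i) = fz i by ring, zf_fz]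
  rw [← hrange, ← Nat.card_coe_set_eq, Nat.card_range_of_injective hinj,
    Nat.card_eq_fintype_card]
  simp only [Fintype.card_sum, Fintype.card_prod, Fintype.card_fin]
  ring

private lemma SS_ktds [NeZero p] {k : ℕ} (hk : k ≤ p) :
    IsKTDS (inflation (KB p)) k (SS p k) := by
  intro v
  rcases dart_cases v with ⟨i, j, rfl⟩ | ⟨i, j, rfl⟩
  · set φ : Fin k → (KB p).Dart := fun t =>
      if zf (fz i + (t.val : ZMod p)) = j then dR p i j
      else dL p i (zf (fz i + (t.val : ZMod p))) with hφ
    have hinj : Function.Injective φ := by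
      intro t t' h
      simp only [hφ] at h
      split_ifs at h with h1 h2 h2
      · exact Fin.ext (zcast_inj (lt_of_lt_of_le t.isLt hk) (lt_of_lt_of_le t'.isLt hk)
          (add_left_cancel (zf_inj (h1.trans h2.symm))))
      · exact absurd h.symm dL_ne_dR
      · exact absurd h dL_ne_dR
      · exact Fin.ext (zcast_inj (lt_of_lt_of_le t.isLt hk) (lt_of_lt_of_le t'.isLt hk)
          (add_left_cancel (zf_inj (dL_inj.mp h).2)))
    have hsub : Set.range φ ⊆ SS p k ∩ (inflation (KB p)).neighborSet (dL p i j) := by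
      rintro d ⟨t, rfl⟩
      simp only [hφ]
      split_ifs with h1
      · refine ⟨⟨i, j, ?_, Or.inr rfl⟩, nbr_dL.mpr (Or.inr rfl)⟩
        have hj : fz j = fz i + (t.val : ZMod p) := by rw [← h1, fz_zf]
        rw [hj, add_sub_cancel_left, ZMod.val_cast_of_lt (lt_of_lt_of_le t.isLt hk)]
        exact t.isLt
      · exact ⟨mem_SS_L t.isLt (lt_of_lt_of_le t.isLt hk),
          nbr_dL.mpr (Or.inl ⟨_, h1, rfl⟩)⟩
    calc k = (Set.range φ).ncard := by
          rw [← Nat.card_coe_set_eq, Nat.card_range_of_injective hinj,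
            Nat.card_eq_fintype_card, Fintype.card_fin]
      _ ≤ _ := Set.ncard_le_ncard hsub (Set.toFinite _)
  · set φ : Fin k → (KB p).Dart := fun t =>
      if zf (fz j - (t.val : ZMod p)) = i then dL p i j
      else dR p (zf (fz j - (t.val : ZMod p))) j with hφ
    have hinj : Function.Injective φ := by
      intro t t' h
      simp only [hφ] at h
      split_ifs at h with h1 h2 h2
      · exact Fin.ext (zcast_inj (lt_of_lt_of_le t.isLt hk) (lt_of_lt_of_le t'.isLt hk)
          (sub_right_injective (zf_inj (h1.trans h2.symm))))
      · exact absurd h dL_ne_dR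
      · exact absurd h.symm dL_ne_dR
      · exact Fin.ext (zcast_inj (lt_of_lt_of_le t.isLt hk) (lt_of_lt_of_le t'.isLt hk)
          (sub_right_injective (zf_inj (dR_inj.mp h).1)))
    have hsub : Set.range φ ⊆ SS p k ∩ (inflation (KB p)).neighborSet (dR p i j) := by
      rintro d ⟨t, rfl⟩
      simp only [hφ]
      split_ifs with h1
      · refine ⟨⟨i, j, ?_, Or.inl rfl⟩, nbr_dR.mpr (Or.inr rfl)⟩
        have hi : fz i = fz j - (t.val : ZMod p) := by rw [← h1, fz_zf]
        rw [hi, sub_sub_cancel, ZMod.val_cast_of_lt (lt_of_lt_of_le t.isLt hk)]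
        exact t.isLt
      · exact ⟨mem_SS_R t.isLt (lt_of_lt_of_le t.isLt hk),
          nbr_dR.mpr (Or.inl ⟨_, h1, rfl⟩)⟩
    calc k = (Set.range φ).ncard := by
          rw [← Nat.card_coe_set_eq, Nat.card_range_of_injective hinj,
            Nat.card_eq_fintype_card, Fintype.card_fin]
      _ ≤ _ := Set.ncard_le_ncard hsub (Set.toFinite _)

end Stmt16Aux

/-- **Proposition (`K_{p,p}`).** For `p ≥ k ≥ 2`, the complete bipartite graph `K_{p,p}`
is a `(⌊p/2⌋ - 1)`HLPM-graph if `p` is even, is a `⌊p/2⌋`-Hamiltonian-like decomposable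
graph if `p` is odd, and `γ_{×k,t}((K_{p,p})_I) = 2pk`. -/
theorem stmt16 (p k : ℕ) (hk : 2 ≤ k) (hkp : k ≤ p) :
    (Even p → IsKHLPM (completeBipartiteGraph (Fin p) (Fin p)) (p / 2 - 1)) ∧
    (Odd p → IsKHLD (completeBipartiteGraph (Fin p) (Fin p)) (p / 2)) ∧
    ktdn (inflation (completeBipartiteGraph (Fin p) (Fin p))) k = 2 * p * k := by
  have hp2 : 2 ≤ p := le_trans hk hkp
  haveI : NeZero p := ⟨by omega⟩
  refine ⟨fun hpe => even_case hp2 (Nat.even_iff.mp hpe),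
    fun hpo => odd_case hp2 (Nat.odd_iff.mp hpo), ?_⟩
  unfold ktdn
  apply le_antisymm
  · exact Nat.sInf_le ⟨SS p k, SS_ktds hkp, SS_ncard hkp⟩
  · exact le_csInf ⟨2 * p * k, SS p k, SS_ktds hkp, SS_ncard hkp⟩
      (by rintro n ⟨S, hS, rfl⟩; exact ktdn_lower (by omega) hS)
end

section
/- For all integers n, k and ℓ with 2 ≤ k < ℓ ≤ ⌊n/2⌋, there exists a graph G of order n (namely G = K_{ℓ,n−ℓ}) such that γ_{×k,t}(G_I) = n(k+1) − 2ℓ. -/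
open SimpleGraph

namespace Aux18

set_option linter.unusedSectionVars false

lemma isKTDS_map {W W' : Type*} {H : SimpleGraph W} {H' : SimpleGraph W'} (φ : H ≃g H') {k : ℕ}
    {S : Set W} (hS : IsKTDS H k S) : IsKTDS H' k (φ '' S) := by
  intro v
  have hN : H'.neighborSet v = φ '' (H.neighborSet (φ.symm v)) := by
    ext w
    simp only [mem_neighborSet, Set.mem_image]
    constructor
    · intro h
      refine ⟨φ.symm w, ?_, φ.apply_symm_apply w⟩
      have := φ.symm.map_adj_iff (v := v) (w := w)
      simpa [mem_neighborSet] using this.mpr h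
    · rintro ⟨u, hu, rfl⟩
      have := φ.map_adj_iff (v := φ.symm v) (w := u)
      rw [φ.apply_symm_apply] at this
      exact this.mpr hu
  rw [hN, ← Set.image_inter φ.injective, Set.ncard_image_of_injective _ φ.injective]
  exact hS (φ.symm v)

lemma ktdn_congr {W W' : Type*} {H : SimpleGraph W} {H' : SimpleGraph W'} (φ : H ≃g H')
    (k : ℕ) : ktdn H k = ktdn H' k := by
  unfold ktdn
  congr 1
  ext n
  constructor
  · rintro ⟨S, h1, rfl⟩
    exact ⟨φ '' S, isKTDS_map φ h1, Set.ncard_image_of_injective _ φ.injective⟩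
  · rintro ⟨S, h1, rfl⟩
    exact ⟨φ.symm '' S, isKTDS_map φ.symm h1,
      Set.ncard_image_of_injective _ φ.symm.injective⟩

abbrev DD (l m : ℕ) := (ZMod l × Fin m) ⊕ (Fin m × ZMod l)

def HG (l m : ℕ) : SimpleGraph (DD l m) := SimpleGraph.fromRel (fun a b =>
  match a, b with
  | .inl p, .inl q => p.1 = q.1
  | .inr p, .inr q => p.1 = q.1
  | .inl p, .inr q => q = (p.2, p.1)
  | .inr _, .inl _ => False)

def mate (l m : ℕ) : DD l m → DD l m :=
  Sum.elim (fun p => .inr (p.2, p.1)) (fun p => .inl (p.2, p.1))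

def own (l m : ℕ) : DD l m → ZMod l ⊕ Fin m := Sum.elim (fun p => .inl p.1) (fun p => .inr p.1)

variable {k l m : ℕ} [NeZero l]

lemma HG_adj_iff (d e : DD l m) :
    (HG l m).Adj d e ↔ (own l m d = own l m e ∧ d ≠ e) ∨ e = mate l m d := by
  rcases d with ⟨i, j⟩ | ⟨j, i⟩ <;> rcases e with ⟨i', j'⟩ | ⟨j', i'⟩ <;>
    simp [HG, own, mate, SimpleGraph.fromRel_adj, Prod.ext_iff] <;> aesop

lemma le_ncard_of_inj {α : Type*} [Fintype α] [DecidableEq α] {k : ℕ} {T : Set α}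
    (f : Fin k → α) (hf : Function.Injective f) (hmem : ∀ t, f t ∈ T) : k ≤ T.ncard := by
  have h1 : ((Finset.univ.image f : Finset α) : Set α) ⊆ T := by
    intro x hx
    simp only [Finset.coe_image, Set.mem_image] at hx
    obtain ⟨t, _, rfl⟩ := hx
    exact hmem t
  calc k = (Finset.univ.image f).card := by
        rw [Finset.card_image_of_injective _ hf, Finset.card_univ, Fintype.card_fin]
    _ = ((Finset.univ.image f : Finset α) : Set α).ncard := (Set.ncard_coe_finset _).symm
    _ ≤ T.ncard := Set.ncard_le_ncard h1 (Set.toFinite T)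

lemma castZ_inj {a b : ℕ} (ha : a < l) (hb : b < l) (h : (a : ZMod l) = b) : a = b := by
  have := congrArg ZMod.val h
  rwa [ZMod.val_cast_of_lt ha, ZMod.val_cast_of_lt hb] at this

def jv (hlm : l ≤ m) (x : ZMod l) : Fin m := ⟨x.val, lt_of_lt_of_le (ZMod.val_lt x) hlm⟩

lemma jv_inj (hlm : l ≤ m) : Function.Injective (jv (l := l) hlm) := fun _ _ h =>
  ZMod.val_injective l (congrArg Fin.val h)

lemma addcast_inj (hkl : k < l) (i : ZMod l) {t₁ t₂ : Fin k}
    (h : i + (t₁.val : ZMod l) = i + (t₂.val : ZMod l)) : t₁ = t₂ :=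
  Fin.ext (castZ_inj (lt_trans t₁.isLt hkl) (lt_trans t₂.isLt hkl) (add_left_cancel h))

lemma subcast_inj (hkl : k < l) (i : ZMod l) {t₁ t₂ : Fin k}
    (h : i - (t₁.val : ZMod l) = i - (t₂.val : ZMod l)) : t₁ = t₂ :=
  Fin.ext (castZ_inj (lt_trans t₁.isLt hkl) (lt_trans t₂.isLt hkl) (sub_right_injective h))

def S1 (k : ℕ) (hlm : l ≤ m) : Finset (DD l m) :=
  Finset.univ.image (fun p : ZMod l × Fin k => Sum.inl (p.1, jv hlm (p.1 + (p.2.val : ZMod l))))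

def S2 (k : ℕ) (hlm : l ≤ m) : Finset (DD l m) :=
  Finset.univ.image (fun p : ZMod l × Fin k => Sum.inr (jv hlm (p.1 + (p.2.val : ZMod l)), p.1))

def S3 (k : ℕ) (hlm : l ≤ m) : Finset (DD l m) :=
  Finset.univ.image (fun p : Fin (m - l) × Fin (k + 1) =>
    Sum.inr (⟨l + p.1.val, by have := p.1.isLt; omega⟩, ((p.2.val : ZMod l))))

def Sf (k : ℕ) (hlm : l ≤ m) : Finset (DD l m) := S1 k hlm ∪ S2 k hlm ∪ S3 k hlm

lemma mem_S1 (hlm : l ≤ m) (i : ZMod l) (t : Fin k) :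
    (Sum.inl (i, jv hlm (i + (t.val : ZMod l))) : DD l m) ∈ Sf k hlm := by
  simp only [Sf, S1, Finset.mem_union, Finset.mem_image]
  exact Or.inl (Or.inl ⟨(i, t), Finset.mem_univ _, rfl⟩)

lemma mem_S2 (hlm : l ≤ m) (i : ZMod l) (t : Fin k) :
    (Sum.inr (jv hlm (i + (t.val : ZMod l)), i) : DD l m) ∈ Sf k hlm := by
  simp only [Sf, S2, Finset.mem_union, Finset.mem_image]
  exact Or.inl (Or.inr ⟨(i, t), Finset.mem_univ _, rfl⟩)

lemma mem_S3 (hlm : l ≤ m) (j : Fin m) (hj : l ≤ j.val) (t : Fin (k + 1)) :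
    (Sum.inr (j, ((t.val : ZMod l))) : DD l m) ∈ Sf k hlm := by
  simp only [Sf, S3, Finset.mem_union, Finset.mem_image]
  refine Or.inr ⟨(⟨j.val - l, by have := j.isLt; omega⟩, t), Finset.mem_univ _, ?_⟩
  congr 1
  refine Prod.ext (Fin.ext ?_) rfl
  simp; omega

lemma isKTDS_Sf (hk : 2 ≤ k) (hkl : k < l) (hlm : l ≤ m) :
    IsKTDS (HG l m) k (↑(Sf k hlm) : Set (DD l m)) := by
  intro v
  rcases v with ⟨i, j⟩ | ⟨j, i⟩
  · -- v = inl (i, j)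
    refine le_ncard_of_inj
      (fun t : Fin k => if jv hlm (i + (t.val : ZMod l)) = j then Sum.inr (j, i)
        else Sum.inl (i, jv hlm (i + (t.val : ZMod l)))) ?_ ?_
    · intro t₁ t₂ h
      dsimp only at h
      split_ifs at h with h1 h2 h2 <;>
        first
          | exact addcast_inj hkl i (jv_inj hlm (h1.trans h2.symm))
          | (simp only [Sum.inl.injEq, Prod.mk.injEq] at h
             exact addcast_inj hkl i (jv_inj hlm h.2))
          | exact absurd h (by simp)
    · intro t
      by_cases h : jv hlm (i + (t.val : ZMod l)) = j
      · rw [if_pos h]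
        refine Set.mem_inter ?_ ?_
        · rw [Finset.mem_coe, ← h]; exact mem_S2 hlm i t
        · rw [mem_neighborSet, HG_adj_iff]; exact Or.inr rfl
      · rw [if_neg h]
        refine Set.mem_inter (Finset.mem_coe.mpr (mem_S1 hlm i t)) ?_
        rw [mem_neighborSet, HG_adj_iff]
        refine Or.inl ⟨rfl, fun heq => h ?_⟩
        simp only [Sum.inl.injEq, Prod.mk.injEq] at heq
        exact heq.2.symm
  · -- v = inr (j, i)
    by_cases hj : j.val < l
    · have hj0 : jv hlm ((j.val : ℕ) : ZMod l) = j :=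
        Fin.ext (by simp [jv, ZMod.val_cast_of_lt hj])
      refine le_ncard_of_inj
        (fun t : Fin k => if ((j.val : ℕ) : ZMod l) - (t.val : ZMod l) = i then Sum.inl (i, j)
          else Sum.inr (j, ((j.val : ℕ) : ZMod l) - (t.val : ZMod l))) ?_ ?_
      · intro t₁ t₂ h
        dsimp only at h
        split_ifs at h with h1 h2 h2 <;>
          first
            | exact subcast_inj hkl _ (h1.trans h2.symm)
            | (simp only [Sum.inr.injEq, Prod.mk.injEq] at h
               exact subcast_inj hkl _ h.2)
            | exact absurd h (by simp)
      · intro t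
        have hadd : ((j.val : ℕ) : ZMod l) - (t.val : ZMod l) + (t.val : ZMod l)
            = ((j.val : ℕ) : ZMod l) := by ring
        have key : jv hlm ((((j.val : ℕ) : ZMod l) - (t.val : ZMod l)) + (t.val : ZMod l)) = j := by
          rw [hadd, hj0]
        by_cases h : ((j.val : ℕ) : ZMod l) - (t.val : ZMod l) = i
        · rw [if_pos h]
          refine Set.mem_inter ?_ ?_
          · rw [Finset.mem_coe]
            have : jv hlm (i + (t.val : ZMod l)) = j := by rw [← h]; exact key
            rw [← this]
            exact mem_S1 hlm i t
          · rw [mem_neighborSet, HG_adj_iff]; exact Or.inr rfl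
        · rw [if_neg h]
          refine Set.mem_inter ?_ ?_
          · rw [Finset.mem_coe]
            have heq : (Sum.inr (j, ((j.val : ℕ) : ZMod l) - (t.val : ZMod l)) : DD l m)
                = Sum.inr (jv hlm ((((j.val : ℕ) : ZMod l) - (t.val : ZMod l)) + (t.val : ZMod l)),
                    ((j.val : ℕ) : ZMod l) - (t.val : ZMod l)) := by rw [key]
            rw [heq]
            exact mem_S2 hlm _ t
          · rw [mem_neighborSet, HG_adj_iff]
            refine Or.inl ⟨rfl, fun heq => h ?_⟩
            simp only [Sum.inr.injEq, Prod.mk.injEq] at heq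
            exact heq.2.symm
    · -- l ≤ j.val
      refine le_ncard_of_inj
        (fun t : Fin k => if ((t.val : ℕ) : ZMod l) = i then Sum.inr (j, ((k : ℕ) : ZMod l))
          else Sum.inr (j, ((t.val : ℕ) : ZMod l))) ?_ ?_
      · intro t₁ t₂ h
        dsimp only at h
        split_ifs at h with h1 h2 h2 <;>
          simp only [Sum.inr.injEq, Prod.mk.injEq] at h <;>
          first
            | exact Fin.ext (castZ_inj (lt_trans t₁.isLt hkl) (lt_trans t₂.isLt hkl)
                (h1.trans h2.symm))
            | exact absurd (castZ_inj hkl (lt_trans t₂.isLt hkl) h.2)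
                (by have := t₂.isLt; omega)
            | exact absurd (castZ_inj (lt_trans t₁.isLt hkl) hkl h.2)
                (by have := t₁.isLt; omega)
            | exact Fin.ext (castZ_inj (lt_trans t₁.isLt hkl) (lt_trans t₂.isLt hkl) h.2)
      · intro t
        have hjl : l ≤ j.val := le_of_not_gt hj
        by_cases h : ((t.val : ℕ) : ZMod l) = i
        · rw [if_pos h]
          refine Set.mem_inter ?_ ?_
          · rw [Finset.mem_coe]
            have := mem_S3 (k := k) hlm j hjl (Fin.last k)
            simpa using this
          · rw [mem_neighborSet, HG_adj_iff]
            refine Or.inl ⟨rfl, fun heq => ?_⟩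
            simp only [Sum.inr.injEq, Prod.mk.injEq] at heq
            have : (k : ℕ) = t.val :=
              castZ_inj hkl (lt_trans t.isLt hkl) (heq.2.symm.trans h.symm)
            omega
        · rw [if_neg h]
          refine Set.mem_inter ?_ ?_
          · rw [Finset.mem_coe]
            have := mem_S3 (k := k) hlm j hjl t.castSucc
            simpa using this
          · rw [mem_neighborSet, HG_adj_iff]
            refine Or.inl ⟨rfl, fun heq => h ?_⟩
            simp only [Sum.inr.injEq, Prod.mk.injEq] at heq
            exact heq.2.symm

lemma mate_involutive : Function.Involutive (mate l m) := by
  rintro (⟨i, j⟩ | ⟨j, i⟩) <;> rfl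

lemma neighbor_subset (d : DD l m) :
    ∀ e, (HG l m).Adj d e → (own l m e = own l m d ∧ e ≠ d) ∨ e = mate l m d := by
  intro e h
  rw [HG_adj_iff] at h
  rcases h with ⟨h1, h2⟩ | h
  · exact Or.inl ⟨h1.symm, fun he => h2 he.symm⟩
  · exact Or.inr h

lemma exists_dart (hm : 0 < m) (x : ZMod l ⊕ Fin m) : ∃ d : DD l m, own l m d = x := by
  rcases x with i | j
  · exact ⟨Sum.inl (i, ⟨0, hm⟩), rfl⟩
  · exact ⟨Sum.inr (j, 0), rfl⟩

lemma lower_bound (hk : 2 ≤ k) (hkl : k < l) (hlm : l ≤ m) (S : Set (DD l m))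
    (hS : IsKTDS (HG l m) k S) : (l + m) * (k + 1) - 2 * l ≤ S.ncard := by
  classical
  have hm : 0 < m := by omega
  set F : Finset (DD l m) := S.toFinite.toFinset with hFdef
  have hFS : (↑F : Set (DD l m)) = S := S.toFinite.coe_toFinset
  set s : (ZMod l ⊕ Fin m) → ℕ := fun x => (F.filter (fun d => own l m d = x)).card with hsdef
  have hfiber : ∀ x : ZMod l ⊕ Fin m,
      (S ∩ {d : DD l m | own l m d = x}).ncard = s x := by
    intro x
    have : (S ∩ {d : DD l m | own l m d = x})
        = ↑(F.filter (fun d => own l m d = x)) := by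
      ext d
      constructor
      · rintro ⟨h1, h2⟩
        exact Finset.mem_coe.mpr (Finset.mem_filter.mpr
          ⟨(Set.Finite.mem_toFinset _).mpr h1, h2⟩)
      · intro h
        have := Finset.mem_filter.mp (Finset.mem_coe.mp h)
        exact Set.mem_inter ((Set.Finite.mem_toFinset _).mp this.1) this.2
    rw [this, Set.ncard_coe_finset]
  -- every vertex's clique has at least k selected darts
  have step1 : ∀ x : ZMod l ⊕ Fin m, k ≤ s x := by
    intro x
    by_contra hcon
    push_neg at hcon
    obtain ⟨d0, hd0⟩ := exists_dart (l := l) hm x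
    rcases Nat.eq_zero_or_pos (s x) with h0 | hpos
    · have hsub : S ∩ (HG l m).neighborSet d0 ⊆ {mate l m d0} := by
        rintro e ⟨heS, heN⟩
        rw [mem_neighborSet] at heN
        rcases neighbor_subset d0 e heN with ⟨h1, _⟩ | h
        · exfalso
          have hemp : (S ∩ {d : DD l m | own l m d = x}) = ∅ := by
            rw [← Set.ncard_eq_zero (Set.toFinite _), hfiber]
            exact h0
          have : e ∈ (S ∩ {d : DD l m | own l m d = x}) :=
            Set.mem_inter heS (by rw [Set.mem_setOf_eq, h1, hd0])
          rw [hemp] at this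
          exact this
        · exact h
      have := hS d0
      have hle : (S ∩ (HG l m).neighborSet d0).ncard ≤ 1 := by
        calc (S ∩ (HG l m).neighborSet d0).ncard ≤ ({mate l m d0} : Set (DD l m)).ncard :=
              Set.ncard_le_ncard hsub (Set.finite_singleton _)
          _ = 1 := Set.ncard_singleton _
      omega
    · have hne : (S ∩ {d : DD l m | own l m d = x}).Nonempty := by
        apply Set.nonempty_of_ncard_ne_zero
        rw [hfiber]; omega
      obtain ⟨d, hdS, hdx⟩ := hne
      have hsub : S ∩ (HG l m).neighborSet d ⊆
          ((S ∩ {e : DD l m | own l m e = x}) \ {d}) ∪ {mate l m d} := by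
        rintro e ⟨heS, heN⟩
        rw [mem_neighborSet] at heN
        rcases neighbor_subset d e heN with ⟨h1, h2⟩ | h
        · exact Or.inl ⟨⟨heS, by rw [Set.mem_setOf_eq, h1, hdx]⟩, h2⟩
        · exact Or.inr h
      have := hS d
      have hle : (S ∩ (HG l m).neighborSet d).ncard ≤ s x := by
        calc (S ∩ (HG l m).neighborSet d).ncard
            ≤ (((S ∩ {e : DD l m | own l m e = x}) \ {d}) ∪ {mate l m d}).ncard :=
              Set.ncard_le_ncard hsub (Set.toFinite _)
          _ ≤ ((S ∩ {e : DD l m | own l m e = x}) \ {d}).ncard + 1 := by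
              refine le_trans (Set.ncard_union_le _ _) ?_
              rw [Set.ncard_singleton]
          _ = (S ∩ {e : DD l m | own l m e = x}).ncard - 1 + 1 := by
              rw [Set.ncard_diff_singleton_of_mem (Set.mem_inter hdS hdx)]
          _ ≤ s x := by rw [hfiber]; omega
      omega
  -- if exactly k, mates are in S
  have step2 : ∀ d : DD l m, d ∈ S → s (own l m d) = k → mate l m d ∈ S := by
    intro d hdS hsk
    by_contra hcon
    have hsub : S ∩ (HG l m).neighborSet d ⊆
        (S ∩ {e : DD l m | own l m e = own l m d}) \ {d} := by
      rintro e ⟨heS, heN⟩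
      rw [mem_neighborSet] at heN
      rcases neighbor_subset d e heN with ⟨h1, h2⟩ | h
      · exact ⟨⟨heS, h1⟩, h2⟩
      · exact absurd (h ▸ heS) hcon
    have := hS d
    have hle : (S ∩ (HG l m).neighborSet d).ncard ≤ k - 1 := by
      calc (S ∩ (HG l m).neighborSet d).ncard
          ≤ ((S ∩ {e : DD l m | own l m e = own l m d}) \ {d}).ncard :=
            Set.ncard_le_ncard hsub (Set.toFinite _)
        _ = (S ∩ {e : DD l m | own l m e = own l m d}).ncard - 1 :=
            Set.ncard_diff_singleton_of_mem (Set.mem_inter hdS rfl)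
        _ = k - 1 := by rw [hfiber, hsk]
    omega
  -- sum decomposition
  have hsum : F.card = (∑ i : ZMod l, s (Sum.inl i)) + (∑ j : Fin m, s (Sum.inr j)) := by
    rw [Finset.card_eq_sum_card_fiberwise
      (f := own l m) (t := Finset.univ) (fun d _ => Finset.mem_univ _)]
    rw [← Fintype.sum_sum_type]
  set Bf : Finset (Fin m) := Finset.univ.filter (fun j => s (Sum.inr j) = k) with hBf
  -- right side bound
  have h3 : (k + 1) * m ≤ (∑ j : Fin m, s (Sum.inr j)) + Bf.card := by
    have : ∀ j : Fin m, k + 1 ≤ s (Sum.inr j) + (if s (Sum.inr j) = k then 1 else 0) := by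
      intro j
      have := step1 (Sum.inr j)
      by_cases h : s (Sum.inr j) = k <;> simp [h] <;> omega
    calc (k + 1) * m = ∑ _j : Fin m, (k + 1) := by
          rw [Finset.sum_const, Finset.card_univ, Fintype.card_fin, smul_eq_mul, mul_comm]
      _ ≤ ∑ j : Fin m, (s (Sum.inr j) + (if s (Sum.inr j) = k then 1 else 0)) :=
          Finset.sum_le_sum (fun j _ => this j)
      _ = (∑ j : Fin m, s (Sum.inr j)) + Bf.card := by
          rw [Finset.sum_add_distrib, Finset.sum_boole, hBf]; simp
  -- left side bounds
  have h1 : k * l ≤ ∑ i : ZMod l, s (Sum.inl i) := by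
    calc k * l = ∑ _i : ZMod l, k := by
          rw [Finset.sum_const, Finset.card_univ, ZMod.card, smul_eq_mul, mul_comm]
      _ ≤ ∑ i : ZMod l, s (Sum.inl i) := Finset.sum_le_sum (fun i _ => step1 (Sum.inl i))
  have h2 : k * Bf.card ≤ ∑ i : ZMod l, s (Sum.inl i) := by
    set FL : Finset (DD l m) := F.filter (fun d => (own l m d).isLeft) with hFL
    have hFLcard : FL.card = ∑ i : ZMod l, s (Sum.inl i) := by
      rw [Finset.card_eq_sum_card_fiberwise
        (f := own l m) (t := Finset.univ.image Sum.inl)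
        (fun d hd => by
          rw [hFL, Finset.mem_coe, Finset.mem_filter] at hd
          rcases hd with ⟨_, hleft⟩
          rw [Finset.mem_coe, Finset.mem_image]
          rcases hx : own l m d with i | j
          · exact ⟨i, Finset.mem_univ _, rfl⟩
          · rw [hx] at hleft; simp at hleft)]
      rw [Finset.sum_image (fun a _ b _ h => Sum.inl_injective h)]
      refine Finset.sum_congr rfl (fun i _ => ?_)
      congr 1
      ext d
      simp only [hFL, Finset.mem_filter, and_assoc]
      constructor
      · rintro ⟨h1, _, h3⟩; exact ⟨h1, h3⟩
      · rintro ⟨h1, h3⟩; exact ⟨h1, by rw [h3]; rfl, h3⟩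
    set FB : Finset (DD l m) :=
      F.filter (fun d => (own l m d).isRight ∧ s (own l m d) = k) with hFB
    have hFBcard : FB.card = k * Bf.card := by
      rw [Finset.card_eq_sum_card_fiberwise
        (f := own l m) (t := Bf.image Sum.inr)
        (fun d hd => by
          rw [hFB, Finset.mem_coe, Finset.mem_filter] at hd
          rcases hd with ⟨_, hright, hsk⟩
          rw [Finset.mem_coe, Finset.mem_image]
          rcases hx : own l m d with i | j
          · rw [hx] at hright; simp at hright
          · rw [hx] at hsk
            exact ⟨j, by rw [hBf, Finset.mem_filter]; exact ⟨Finset.mem_univ _, hsk⟩, rfl⟩)]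
      rw [Finset.sum_image (fun a _ b _ h => Sum.inr_injective h)]
      have : ∀ j ∈ Bf, (FB.filter (fun d => own l m d = Sum.inr j)).card = k := by
        intro j hj
        rw [hBf, Finset.mem_filter] at hj
        have : FB.filter (fun d => own l m d = Sum.inr j)
            = F.filter (fun d => own l m d = Sum.inr j) := by
          ext d
          simp only [hFB, Finset.mem_filter, and_assoc]
          constructor
          · rintro ⟨h1, _, _, h4⟩; exact ⟨h1, h4⟩
          · rintro ⟨h1, h4⟩
            exact ⟨h1, by rw [h4]; rfl, by rw [h4]; exact hj.2, h4⟩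
        rw [this]
        exact hj.2
      rw [Finset.sum_congr rfl this, Finset.sum_const, smul_eq_mul, mul_comm]
    have himg : FB.image (mate l m) ⊆ FL := by
      intro e he
      rw [Finset.mem_image] at he
      obtain ⟨d, hd, rfl⟩ := he
      rw [hFB, Finset.mem_filter] at hd
      rcases hd with ⟨hdF, hright, hsk⟩
      have hdS : d ∈ S := by rw [← hFS]; exact hdF
      have hmS : mate l m d ∈ S := step2 d hdS hsk
      rw [hFL, Finset.mem_filter]
      refine ⟨(Set.Finite.mem_toFinset S.toFinite).mpr hmS, ?_⟩
      rcases d with ⟨i, j⟩ | ⟨j, i⟩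
      · simp [own] at hright
      · rfl
    calc k * Bf.card = FB.card := hFBcard.symm
      _ = (FB.image (mate l m)).card :=
          (Finset.card_image_of_injective _ mate_involutive.injective).symm
      _ ≤ FL.card := Finset.card_le_card himg
      _ = ∑ i : ZMod l, s (Sum.inl i) := hFLcard
  have hBm : Bf.card ≤ m := by
    calc Bf.card ≤ Finset.univ.card := Finset.card_filter_le _ _
      _ = m := by rw [Finset.card_univ, Fintype.card_fin]
  -- final arithmetic
  have hSF : S.ncard = F.card := Set.ncard_eq_toFinset_card S
  have e1 : (k - 1) * l + Bf.card ≤ ∑ i : ZMod l, s (Sum.inl i) := by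
    obtain ⟨k', rfl⟩ : ∃ k', k = k' + 1 := ⟨k - 1, by omega⟩
    rcases le_total Bf.card l with h | h
    · have : (k' + 1 - 1) * l + Bf.card ≤ (k' + 1) * l := by
        simp only [Nat.add_sub_cancel]
        calc k' * l + Bf.card ≤ k' * l + l := by omega
          _ = (k' + 1) * l := by ring
      omega
    · have hml : (k' + 1 - 1) * l + Bf.card ≤ (k' + 1) * Bf.card := by
        simp only [Nat.add_sub_cancel]
        calc k' * l + Bf.card ≤ k' * Bf.card + Bf.card := by
              exact Nat.add_le_add_right (Nat.mul_le_mul_left _ h) _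
          _ = (k' + 1) * Bf.card := by ring
      omega
  have key : (l + m) * (k + 1) = ((k - 1) * l + (k + 1) * m) + 2 * l := by
    obtain ⟨k', rfl⟩ : ∃ k', k = k' + 1 := ⟨k - 1, by omega⟩
    simp only [Nat.add_sub_cancel]
    ring
  rw [hSF, hsum, key]
  omega
lemma card_Sf (hkl : k < l) (hlm : l ≤ m) :
    (Sf k hlm).card = l * k + l * k + (m - l) * (k + 1) := by
  have hd1 : Disjoint (S1 k hlm) (S2 k hlm) := by
    rw [Finset.disjoint_left]
    intro a h1 h2
    simp only [S1, S2, Finset.mem_image] at h1 h2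
    obtain ⟨p, _, rfl⟩ := h1
    obtain ⟨q, _, hq⟩ := h2
    exact Sum.inr_ne_inl hq
  have hd2 : Disjoint (S1 k hlm ∪ S2 k hlm) (S3 k hlm) := by
    rw [Finset.disjoint_left]
    intro a h1 h2
    simp only [S1, S2, S3, Finset.mem_union, Finset.mem_image] at h1 h2
    obtain ⟨q, _, hq⟩ := h2
    rcases h1 with ⟨p, _, rfl⟩ | ⟨p, _, rfl⟩
    · exact Sum.inr_ne_inl hq
    · rw [Sum.inr.injEq, Prod.ext_iff] at hq
      have h1 := congrArg Fin.val hq.1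
      have hv : (jv hlm (p.1 + (p.2.val : ZMod l))).val < l := ZMod.val_lt _
      simp only [jv] at h1 hv
      omega
  have hc1 : (S1 k hlm).card = l * k := by
    rw [S1, Finset.card_image_of_injective, Finset.card_univ, Fintype.card_prod, ZMod.card,
      Fintype.card_fin]
    intro p q hpq
    rw [Sum.inl.injEq, Prod.ext_iff] at hpq
    obtain ⟨h1, h2⟩ := hpq
    dsimp only at h1 h2
    rw [h1] at h2
    exact Prod.ext h1 (addcast_inj hkl _ (jv_inj hlm h2))
  have hc2 : (S2 k hlm).card = l * k := by
    rw [S2, Finset.card_image_of_injective, Finset.card_univ, Fintype.card_prod, ZMod.card,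
      Fintype.card_fin]
    intro p q hpq
    rw [Sum.inr.injEq, Prod.ext_iff] at hpq
    obtain ⟨h2, h1⟩ := hpq
    dsimp only at h1 h2
    rw [h1] at h2
    exact Prod.ext h1 (addcast_inj hkl _ (jv_inj hlm h2))
  have hc3 : (S3 k hlm).card = (m - l) * (k + 1) := by
    rw [S3, Finset.card_image_of_injective, Finset.card_univ, Fintype.card_prod,
      Fintype.card_fin, Fintype.card_fin]
    intro p q hpq
    rw [Sum.inr.injEq, Prod.ext_iff] at hpq
    obtain ⟨h1, h2⟩ := hpq
    dsimp only at h1 h2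
    have h1' := congrArg Fin.val h1
    simp only [Fin.val] at h1'
    refine Prod.ext (Fin.ext (by omega)) (Fin.ext ?_)
    exact castZ_inj (lt_of_lt_of_le p.2.isLt hkl) (lt_of_lt_of_le q.2.isLt hkl) h2
  rw [Sf, Finset.card_union_of_disjoint hd2, Finset.card_union_of_disjoint hd1, hc1, hc2, hc3]

def GG (l m : ℕ) : SimpleGraph (ZMod l ⊕ Fin m) := completeBipartiteGraph (ZMod l) (Fin m)

def dartEquiv (l m : ℕ) : DD l m ≃ (GG l m).Dart where
  toFun := Sum.elim (fun p => ⟨(Sum.inl p.1, Sum.inr p.2), by simp [GG]⟩)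
                    (fun p => ⟨(Sum.inr p.1, Sum.inl p.2), by simp [GG]⟩)
  invFun d := match d with
    | ⟨(Sum.inl _, Sum.inl _), h⟩ => absurd h (by simp [GG])
    | ⟨(Sum.inl a, Sum.inr b), _⟩ => Sum.inl (a, b)
    | ⟨(Sum.inr a, Sum.inl b), _⟩ => Sum.inr (a, b)
    | ⟨(Sum.inr _, Sum.inr _), h⟩ => absurd h (by simp [GG])
  left_inv := by rintro (⟨i, j⟩ | ⟨j, i⟩) <;> rfl
  right_inv := by
    rintro ⟨⟨a | a, b | b⟩, h⟩
    · exact absurd h (by simp [GG])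
    · rfl
    · rfl
    · exact absurd h (by simp [GG])

def isoHG (l m : ℕ) : HG l m ≃g inflation (GG l m) where
  toEquiv := dartEquiv l m
  map_rel_iff' := by
    rintro (⟨i, j⟩ | ⟨j, i⟩) (⟨i', j'⟩ | ⟨j', i'⟩) <;>
      simp [inflation, HG, dartEquiv, SimpleGraph.fromRel_adj, SimpleGraph.Dart.ext_iff,
        Prod.ext_iff] <;> aesop


lemma ktdn_HG {k l m : ℕ} [NeZero l] (hk : 2 ≤ k) (hkl : k < l) (hlm : l ≤ m) :
    ktdn (HG l m) k = (l + m) * (k + 1) - 2 * l := by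
  have hcard : ((Sf k hlm : Finset (DD l m)) : Set (DD l m)).ncard
      = (l + m) * (k + 1) - 2 * l := by
    rw [Set.ncard_coe_finset, card_Sf hkl hlm]
    obtain ⟨m', rfl⟩ : ∃ m', m = l + m' := ⟨m - l, by omega⟩
    have h1 : (l + (l + m')) * (k + 1) = l * k + l * k + m' * (k + 1) + 2 * l := by ring
    have h2 : l + m' - l = m' := by omega
    rw [h2, h1]
    omega
  have hmem : (l + m) * (k + 1) - 2 * l
      ∈ {n | ∃ S : Set (DD l m), IsKTDS (HG l m) k S ∧ S.ncard = n} :=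
    ⟨(↑(Sf k hlm) : Set (DD l m)), isKTDS_Sf hk hkl hlm, hcard⟩
  refine le_antisymm (Nat.sInf_le hmem) (le_csInf ⟨_, hmem⟩ ?_)
  rintro b ⟨S, hS, rfl⟩
  exact lower_bound hk hkl hlm S hS

end Aux18

/-- **Theorem (existence of graphs attaining `n(k+1) - 2ℓ`).** For all integers `n`, `k`,
`ℓ` with `2 ≤ k < ℓ ≤ ⌊n/2⌋`, there is a graph `G` of order `n` (namely `K_{ℓ,n-ℓ}`) with
`γ_{×k,t}(G_I) = n(k+1) - 2ℓ`. -/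
theorem stmt18 (n k ℓ : ℕ) (hk : 2 ≤ k) (hkl : k < ℓ) (hl : ℓ ≤ n / 2) :
    ∃ (Vt : Type) (_ : Fintype Vt) (G : SimpleGraph Vt),
      Fintype.card Vt = n ∧ ktdn (inflation G) k = n * (k + 1) - 2 * ℓ := by
  have hm2 : 2 * ℓ ≤ n := by omega
  haveI : NeZero ℓ := ⟨by omega⟩
  have hlm : ℓ ≤ n - ℓ := by omega
  refine ⟨ZMod ℓ ⊕ Fin (n - ℓ), inferInstance, Aux18.GG ℓ (n - ℓ), ?_, ?_⟩
  · rw [Fintype.card_sum, ZMod.card, Fintype.card_fin]; omega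
  · rw [← Aux18.ktdn_congr (Aux18.isoHG ℓ (n - ℓ)) k, Aux18.ktdn_HG hk hkl hlm]
    have hln : ℓ + (n - ℓ) = n := by omega
    rw [hln]
end

section
/- Let G be the complete multipartite graph K_{n_1,n_2,...,n_m}, let n = n_1 + n_2 + ... + n_m, and let n' = max{ Σ_{i∈J} n_i : J ⊆ {1,2,...,m} and Σ_{i∈J} n_i ≤ n/2 }. Then for every integer k with 2 ≤ k < n', γ_{×k,t}(G_I) ≤ n(k+1) − 2n'. -/
open SimpleGraph

section AuxProof

open scoped Classical

variable {V : Type*}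

theorem aux_adj {G : SimpleGraph V} (d₁ d₂ : G.Dart) :
    (inflation G).Adj d₁ d₂ ↔ d₁ ≠ d₂ ∧ (d₁.fst = d₂.fst ∨ d₂ = d₁.symm) := by
  have hsy : ∀ e f : G.Dart, e.toProd = f.toProd.swap ↔ f = e.symm := by
    intro e f
    constructor
    · intro h
      apply SimpleGraph.Dart.ext
      show f.toProd = e.toProd.swap
      rw [h, Prod.swap_swap]
    · intro h
      subst h
      show e.toProd = e.toProd.swap.swap
      rw [Prod.swap_swap]
  rw [inflation, SimpleGraph.fromRel_adj]
  constructor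
  · rintro ⟨hne, (h | h) | (h | h)⟩
    · exact ⟨hne, Or.inl h⟩
    · exact ⟨hne, Or.inr ((hsy _ _).1 h)⟩
    · exact ⟨hne, Or.inl h.symm⟩
    · have h2 : d₁ = d₂.symm := (hsy _ _).1 h
      refine ⟨hne, Or.inr ?_⟩
      rw [h2, SimpleGraph.Dart.symm_symm]
  · rintro ⟨hne, h | h⟩
    · exact ⟨hne, Or.inl (Or.inl h)⟩
    · exact ⟨hne, Or.inl (Or.inr ((hsy _ _).2 h))⟩

theorem aux_inflation_ktds [Finite V] [DecidableEq V] (G : SimpleGraph V) (k : ℕ) (S : Finset G.Dart)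
    (h : ∀ d : G.Dart,
      k + 1 ≤ (S.filter fun d' => d'.fst = d.fst).card ∨
      (k ≤ (S.filter fun d' => d'.fst = d.fst).card ∧
        ∀ d' ∈ S, d'.fst = d.fst → d'.symm ∈ S)) :
    IsKTDS (inflation G) k ↑S := by
  haveI : Finite G.Dart :=
    Finite.of_injective SimpleGraph.Dart.toProd fun a b => SimpleGraph.Dart.ext a b
  intro d
  have hfstsnd : d.fst ≠ d.snd := G.ne_of_adj d.adj
  have hdsymm_ne : d.symm ≠ d := by
    intro he
    have h2 : d.toProd.2 = d.toProd.1 := congrArg (fun e : G.Dart => e.toProd.1) he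
    exact hfstsnd h2.symm
  set Fx : Finset G.Dart := S.filter fun d' => d'.fst = d.fst with hFx
  have key : ∃ W : Finset G.Dart, k ≤ W.card ∧
      ↑W ⊆ (↑S : Set G.Dart) ∩ (inflation G).neighborSet d := by
    rcases h d with hbig | ⟨hk, hclosed⟩
    · rw [← hFx] at hbig
      refine ⟨Fx.erase d, ?_, ?_⟩
      · have := Finset.pred_card_le_card_erase (s := Fx) (a := d)
        omega
      · intro d' hd'
        rw [Finset.mem_coe, Finset.mem_erase] at hd'
        obtain ⟨hne, hmem⟩ := hd'
        rw [hFx, Finset.mem_filter] at hmem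
        refine ⟨hmem.1, ?_⟩
        rw [SimpleGraph.mem_neighborSet, aux_adj]
        exact ⟨fun he => hne he.symm, Or.inl hmem.2.symm⟩
    · rw [← hFx] at hk
      by_cases hdS : d ∈ Fx
      · refine ⟨insert d.symm (Fx.erase d), ?_, ?_⟩
        · have h1 : d.symm ∉ Fx.erase d := by
            intro hmem
            have h2 := (Finset.mem_filter.1 (Finset.mem_of_mem_erase hmem)).2
            exact hfstsnd (h2 : d.toProd.2 = d.toProd.1).symm
          rw [Finset.card_insert_of_notMem h1, Finset.card_erase_of_mem hdS]
          omega
        · intro d' hd'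
          rw [Finset.mem_coe, Finset.mem_insert] at hd'
          rcases hd' with rfl | hd'
          · have hdmem := Finset.mem_filter.1 hdS
            refine ⟨hclosed d hdmem.1 rfl, ?_⟩
            rw [SimpleGraph.mem_neighborSet, aux_adj]
            exact ⟨fun he => hdsymm_ne he.symm, Or.inr rfl⟩
          · rw [Finset.mem_erase] at hd'
            obtain ⟨hne, hmem⟩ := hd'
            rw [hFx, Finset.mem_filter] at hmem
            refine ⟨hmem.1, ?_⟩
            rw [SimpleGraph.mem_neighborSet, aux_adj]
            exact ⟨fun he => hne he.symm, Or.inl hmem.2.symm⟩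
      · refine ⟨Fx, hk, ?_⟩
        intro d' hd'
        rw [Finset.mem_coe] at hd'
        have hmem := hd'
        rw [hFx, Finset.mem_filter] at hmem
        refine ⟨hmem.1, ?_⟩
        rw [SimpleGraph.mem_neighborSet, aux_adj]
        exact ⟨fun he => hdS (he ▸ hd'), Or.inl hmem.2.symm⟩
  obtain ⟨W, hWk, hWsub⟩ := key
  calc k ≤ W.card := hWk
    _ = (↑W : Set G.Dart).ncard := (Set.ncard_coe_finset W).symm
    _ ≤ _ := Set.ncard_le_ncard hWsub (Set.toFinite _)

end AuxProof

/-- **Proposition (complete multipartite graphs).** Let `G = K_{n_1,…,n_m}`,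
`n = n_1 + ⋯ + n_m` and `n' = max { Σ_{i ∈ J} n_i : J ⊆ {1,…,m}, Σ_{i ∈ J} n_i ≤ n/2 }`.
Then for every `2 ≤ k < n'`, `γ_{×k,t}(G_I) ≤ n(k+1) - 2n'`. -/
theorem stmt19 (m : ℕ) (ns : Fin m → ℕ) (n' k : ℕ)
    (hn' : IsGreatest
      {s : ℕ | ∃ J : Finset (Fin m), s = ∑ i ∈ J, ns i ∧ 2 * s ≤ ∑ i, ns i} n')
    (hk2 : 2 ≤ k) (hk : k < n') :
    ktdn (inflation (completeMultipartiteGraph fun i : Fin m => Fin (ns i))) k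
      ≤ (∑ i, ns i) * (k + 1) - 2 * n' := by
  classical
  obtain ⟨⟨J, hJsum, hJle⟩, -⟩ := hn'
  set CG := completeMultipartiteGraph fun i : Fin m => Fin (ns i) with hGdef
  set n := ∑ i, ns i with hndef
  haveI : NeZero n' := ⟨by omega⟩
  haveI : Finite CG.Dart :=
    Finite.of_injective SimpleGraph.Dart.toProd fun a b => SimpleGraph.Dart.ext a b
  haveI : Fintype CG.Dart := Fintype.ofFinite _
  have hGadj : ∀ x y : ((i : Fin m) × Fin (ns i)), CG.Adj x y ↔ x.1 ≠ y.1 := by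
    intro x y; simp [hGdef, completeMultipartiteGraph]
  have hcardV : Fintype.card ((i : Fin m) × Fin (ns i)) = n := by
    simp [Fintype.card_sigma, hndef]
  have hkn' : k ≤ n' := le_of_lt hk
  -- basic part-size facts
  have h1 : ∀ i : Fin m, n' + ns i ≤ n := by
    intro i
    by_cases hi : i ∈ J
    · have h2 : ns i ≤ ∑ j ∈ J, ns j :=
        Finset.single_le_sum (fun j _ => Nat.zero_le _) hi
      omega
    · have h2 : ∑ j ∈ insert i J, ns j ≤ ∑ j, ns j :=
        Finset.sum_le_sum_of_subset (Finset.subset_univ _)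
      rw [Finset.sum_insert hi] at h2
      omega
  -- the sets A and B
  set A : Finset ((i : Fin m) × Fin (ns i)) := Finset.univ.filter (fun x : ((i : Fin m) × Fin (ns i)) => x.1 ∈ J) with hAdef
  set B : Finset ((i : Fin m) × Fin (ns i)) := Finset.univ.filter (fun x : ((i : Fin m) × Fin (ns i)) => x.1 ∉ J) with hBdef
  have hAcard : A.card = n' := by
    have h2 : A = J.sigma (fun i => Finset.univ) := by
      ext ⟨i, v⟩; simp [hAdef, Finset.mem_sigma]
    rw [h2, Finset.card_sigma, hJsum]
    simp
  have hBcard : n' + B.card = n := by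
    have h2 : B = Jᶜ.sigma (fun i => Finset.univ) := by
      ext ⟨i, v⟩; simp [hBdef, Finset.mem_sigma]
    rw [h2, Finset.card_sigma]
    have h3 := Finset.sum_add_sum_compl J (fun i => ns i)
    simp only [Finset.card_univ, Fintype.card_fin]
    omega
  have hn'B : n' ≤ B.card := by omega
  -- the maps a and b
  set a : ZMod n' → ((i : Fin m) × Fin (ns i)) := fun i =>
    ((A.equivFin.symm ⟨i.val, by rw [hAcard]; exact ZMod.val_lt i⟩ : {x // x ∈ A}) : ((i : Fin m) × Fin (ns i)))
    with hadef
  set b : ZMod n' → ((i : Fin m) × Fin (ns i)) := fun j =>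
    ((B.equivFin.symm ⟨j.val, lt_of_lt_of_le (ZMod.val_lt j) hn'B⟩ : {x // x ∈ B}) : ((i : Fin m) × Fin (ns i)))
    with hbdef
  have haJ : ∀ i, (a i).1 ∈ J := by
    intro i
    have h2 : a i ∈ A := (A.equivFin.symm _).2
    exact (Finset.mem_filter.1 h2).2
  have hbJ : ∀ j, (b j).1 ∉ J := by
    intro j
    have h2 : b j ∈ B := (B.equivFin.symm _).2
    exact (Finset.mem_filter.1 h2).2
  have ha_inj : Function.Injective a := by
    intro i j hij
    have h3 := A.equivFin.symm.injective (Subtype.ext hij)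
    exact ZMod.val_injective n' (congrArg Fin.val h3)
  have hb_inj : Function.Injective b := by
    intro i j hij
    have h3 := B.equivFin.symm.injective (Subtype.ext hij)
    exact ZMod.val_injective n' (congrArg Fin.val h3)
  have ha_surj : ∀ x ∈ A, ∃ i, a i = x := by
    intro x hx
    set f := A.equivFin ⟨x, hx⟩ with hfdef
    have hflt : (f : ℕ) < n' := by rw [← hAcard]; exact f.isLt
    refine ⟨((f : ℕ) : ZMod n'), ?_⟩
    have hv : (((f : ℕ) : ZMod n')).val = (f : ℕ) := ZMod.val_cast_of_lt hflt
    have h4 : (⟨(((f : ℕ) : ZMod n')).val, lt_of_lt_of_le (ZMod.val_lt _) (le_of_eq hAcard.symm)⟩ : Fin A.card) = f :=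
      Fin.ext hv
    have h6 : (A.equivFin.symm f) = ⟨x, hx⟩ := by rw [hfdef]; exact Equiv.symm_apply_apply _ _
    exact (congrArg (fun t : Fin A.card =>
      ((A.equivFin.symm t : {x // x ∈ A}) : ((i : Fin m) × Fin (ns i)))) h4).trans
      (congrArg Subtype.val h6)
  have hb_surj : ∀ j₀ : Fin B.card, (j₀ : ℕ) < n' → ∃ j : ZMod n', b j = B.equivFin.symm j₀ := by
    intro j₀ hj₀
    refine ⟨(((j₀ : ℕ) : ZMod n')), ?_⟩
    have hv : ((((j₀ : ℕ)) : ZMod n')).val = (j₀ : ℕ) := ZMod.val_cast_of_lt hj₀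
    have h4 : (⟨((((j₀ : ℕ)) : ZMod n')).val, lt_of_lt_of_le (ZMod.val_lt _) hn'B⟩ : Fin B.card) = j₀ :=
      Fin.ext hv
    exact congrArg (fun t : Fin B.card =>
      ((B.equivFin.symm t : {x // x ∈ B}) : ((i : Fin m) × Fin (ns i)))) h4
  have hab : ∀ i j, a i ≠ b j := fun i j h => hbJ j (h ▸ haJ i)
  have hadj_ab : ∀ i j, CG.Adj (a i) (b j) :=
    fun i j => (hGadj _ _).2 (fun h => hbJ j (h ▸ haJ i))
  -- the extra sets T y of k+1 neighbours
  have hNcard : ∀ y : ((i : Fin m) × Fin (ns i)), k + 1 ≤ (Finset.univ.filter fun z : ((i : Fin m) × Fin (ns i)) => z.1 ≠ y.1).card := by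
    intro y
    have hsig : (Finset.univ.filter fun z : ((i : Fin m) × Fin (ns i)) => z.1 ≠ y.1)
        = ({y.1}ᶜ : Finset (Fin m)).sigma (fun i => Finset.univ) := by
      ext ⟨i, v⟩; simp [Finset.mem_sigma, Finset.mem_compl]
    rw [hsig, Finset.card_sigma]
    have h5 := Finset.sum_add_sum_compl {y.1} (fun i => ns i)
    rw [Finset.sum_singleton] at h5
    simp only [Finset.card_univ, Fintype.card_fin]
    have h6 := h1 y.1
    omega
  have hTex : ∀ y : ((i : Fin m) × Fin (ns i)), ∃ t ⊆ (Finset.univ.filter fun z : ((i : Fin m) × Fin (ns i)) => z.1 ≠ y.1), t.card = k + 1 :=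
    fun y => Finset.exists_subset_card_eq (hNcard y)
  choose T hTsub hTcard using hTex
  have hTadj : ∀ y : ((i : Fin m) × Fin (ns i)), ∀ z ∈ T y, CG.Adj y z := by
    intro y z hz
    have := Finset.mem_filter.1 (hTsub y hz)
    exact (hGadj _ _).2 (fun h => this.2 h.symm)
  -- the dominating set S
  set R : ((i : Fin m) × Fin (ns i)) → ((i : Fin m) × Fin (ns i)) → Prop := fun x y =>
    (∃ i j : ZMod n', x = a i ∧ y = b j ∧ (j - i).val < k) ∨
    (∃ i j : ZMod n', x = b j ∧ y = a i ∧ (j - i).val < k) ∨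
    (x.1 ∉ J ∧ (∀ j, x ≠ b j) ∧ y ∈ T x) with hRdef
  set S : Finset CG.Dart := Finset.univ.filter fun d => R d.fst d.snd with hSdef
  have hSmem : ∀ d : CG.Dart, d ∈ S ↔ R d.fst d.snd := by
    intro d; simp [hSdef]
  set fib : ((i : Fin m) × Fin (ns i)) → ℕ := fun x => (S.filter fun d => d.fst = x).card with hfibdef
  -- row and column counts
  have hrow : ∀ i : ZMod n', (Finset.univ.filter fun c : ZMod n' => (c - i).val < k).card = k := by
    intro i
    have h2 := Finset.card_nbij (s := (Finset.univ : Finset (Fin k)))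
      (t := Finset.univ.filter fun c : ZMod n' => (c - i).val < k)
      (fun t => ((t : ℕ) : ZMod n') + i)
      (fun t _ => by
        simp only [Finset.mem_coe, Finset.mem_filter, Finset.mem_univ, true_and, add_sub_cancel_right]
        rw [ZMod.val_cast_of_lt (lt_of_lt_of_le t.isLt hkn')]
        exact t.isLt)
      (fun t _ t' _ h => by
        have h3 : ((t : ℕ) : ZMod n') = ((t' : ℕ) : ZMod n') := by
          have := add_right_cancel h; exact this
        have h4 := congrArg ZMod.val h3
        rw [ZMod.val_cast_of_lt (lt_of_lt_of_le t.isLt hkn'),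
          ZMod.val_cast_of_lt (lt_of_lt_of_le t'.isLt hkn')] at h4
        exact Fin.ext h4)
      (fun c hc => by
        simp only [Finset.coe_filter, Set.mem_setOf_eq, Finset.mem_univ, true_and] at hc
        refine ⟨⟨(c - i).val, hc⟩, Finset.mem_coe.2 (Finset.mem_univ _), ?_⟩
        show (((c - i).val : ℕ) : ZMod n') + i = c
        rw [ZMod.natCast_rightInverse (c - i), sub_add_cancel])
    rw [← h2, Finset.card_univ, Fintype.card_fin]
  have hcol : ∀ j : ZMod n', (Finset.univ.filter fun c : ZMod n' => (j - c).val < k).card = k := by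
    intro j
    have h2 := Finset.card_nbij (s := (Finset.univ : Finset (Fin k)))
      (t := Finset.univ.filter fun c : ZMod n' => (j - c).val < k)
      (fun t => j - ((t : ℕ) : ZMod n'))
      (fun t _ => by
        simp only [Finset.mem_coe, Finset.mem_filter, Finset.mem_univ, true_and, sub_sub_cancel]
        rw [ZMod.val_cast_of_lt (lt_of_lt_of_le t.isLt hkn')]
        exact t.isLt)
      (fun t _ t' _ h => by
        have h3 : ((t : ℕ) : ZMod n') = ((t' : ℕ) : ZMod n') := by
          have := sub_right_injective h; exact this
        have h4 := congrArg ZMod.val h3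
        rw [ZMod.val_cast_of_lt (lt_of_lt_of_le t.isLt hkn'),
          ZMod.val_cast_of_lt (lt_of_lt_of_le t'.isLt hkn')] at h4
        exact Fin.ext h4)
      (fun c hc => by
        simp only [Finset.coe_filter, Set.mem_setOf_eq, Finset.mem_univ, true_and] at hc
        refine ⟨⟨(j - c).val, hc⟩, Finset.mem_coe.2 (Finset.mem_univ _), ?_⟩
        show j - (((j - c).val : ℕ) : ZMod n') = c
        rw [ZMod.natCast_rightInverse (j - c), sub_sub_cancel])
    rw [← h2, Finset.card_univ, Fintype.card_fin]  -- fiber cardinalities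
  have hfibA : ∀ i : ZMod n', fib (a i) = k := by
    intro i
    have h2 := Finset.card_nbij
      (s := Finset.univ.filter fun c : ZMod n' => (c - i).val < k)
      (t := S.filter fun d => d.fst = a i)
      (fun c => (⟨(a i, b c), hadj_ab i c⟩ : CG.Dart))
      (fun c hc => by
        rw [Finset.mem_coe, Finset.mem_filter] at hc
        rw [Finset.mem_coe, Finset.mem_filter, hSmem]
        exact ⟨Or.inl ⟨i, c, rfl, rfl, hc.2⟩, rfl⟩)
      (fun c _ c' _ h => by
        have h3 := congrArg (fun d : CG.Dart => d.toProd.2) h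
        exact hb_inj h3)
      (fun d hd => by
        rw [Finset.mem_coe, Finset.mem_filter, hSmem] at hd
        obtain ⟨hdS, hdfst⟩ := hd
        rcases hdS with ⟨i', c, h1', h2', h3'⟩ | ⟨i', c, h1', h2', h3'⟩ | ⟨h1', h2', h3'⟩
        · have hii : i' = i := ha_inj (h1'.symm.trans hdfst)
          subst hii
          refine ⟨c, ?_, ?_⟩
          · rw [Finset.mem_coe, Finset.mem_filter]
            exact ⟨Finset.mem_univ _, h3'⟩
          · apply SimpleGraph.Dart.ext
            show (a i', b c) = d.toProd
            rw [← hdfst, ← h2']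
        · exact absurd (hdfst.symm.trans h1') (hab i c)
        · exact absurd (haJ i) (hdfst ▸ h1'))
    show (S.filter fun d => d.fst = a i).card = k
    rw [← h2, hrow]
  have hfibB : ∀ j : ZMod n', fib (b j) = k := by
    intro j
    have h2 := Finset.card_nbij
      (s := Finset.univ.filter fun c : ZMod n' => (j - c).val < k)
      (t := S.filter fun d => d.fst = b j)
      (fun c => (⟨(b j, a c), (hadj_ab c j).symm⟩ : CG.Dart))
      (fun c hc => by
        rw [Finset.mem_coe, Finset.mem_filter] at hc
        rw [Finset.mem_coe, Finset.mem_filter, hSmem]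
        exact ⟨Or.inr (Or.inl ⟨c, j, rfl, rfl, hc.2⟩), rfl⟩)
      (fun c _ c' _ h => by
        have h3 := congrArg (fun d : CG.Dart => d.toProd.2) h
        exact ha_inj h3)
      (fun d hd => by
        rw [Finset.mem_coe, Finset.mem_filter, hSmem] at hd
        obtain ⟨hdS, hdfst⟩ := hd
        rcases hdS with ⟨i', c, h1', h2', h3'⟩ | ⟨i', c, h1', h2', h3'⟩ | ⟨h1', h2', h3'⟩
        · exact absurd (h1'.symm.trans hdfst) (hab i' j)
        · have hcc : c = j := hb_inj (h1'.symm.trans hdfst)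
          rw [hcc] at h3'
          refine ⟨i', ?_, ?_⟩
          · rw [Finset.mem_coe, Finset.mem_filter]
            exact ⟨Finset.mem_univ _, h3'⟩
          · apply SimpleGraph.Dart.ext
            show (b j, a i') = d.toProd
            rw [← hdfst, ← h2']
        · exact absurd hdfst (h2' j))
    show (S.filter fun d => d.fst = b j).card = k
    rw [← h2, hcol]
  have hfibC : ∀ y : ((i : Fin m) × Fin (ns i)), y.1 ∉ J → (∀ j, y ≠ b j) → fib y = k + 1 := by
    intro y hy1 hy2
    have h2 := Finset.card_bij (t := S.filter fun d => d.fst = y)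
      (fun (z : (i : Fin m) × Fin (ns i)) (hz : z ∈ T y) =>
        (⟨(y, z), hTadj y z hz⟩ : CG.Dart))
      (fun z hz => by
        rw [Finset.mem_filter, hSmem]
        exact ⟨Or.inr (Or.inr ⟨hy1, hy2, hz⟩), rfl⟩)
      (fun z hz z' hz' h => by
        have h3 := congrArg (fun d : CG.Dart => d.toProd.2) h
        exact h3)
      (fun d hd => by
        rw [Finset.mem_filter, hSmem] at hd
        obtain ⟨hdS, hdfst⟩ := hd
        rcases hdS with ⟨i', c, h1', h2', h3'⟩ | ⟨i', c, h1', h2', h3'⟩ | ⟨h1', h2', h3'⟩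
        · have h4 := haJ i'
          rw [← (hdfst.symm.trans h1')] at h4
          exact absurd h4 hy1
        · exact absurd (hdfst.symm.trans h1') (hy2 c)
        · have h5 : d.snd ∈ T y := by rw [← hdfst]; exact h3'
          refine ⟨d.snd, h5, ?_⟩
          apply SimpleGraph.Dart.ext
          show (y, d.snd) = d.toProd
          rw [← hdfst])
    show (S.filter fun d => d.fst = y).card = k + 1
    rw [← h2, hTcard]  -- the k-tuple total domination condition
  have hcond : ∀ d : CG.Dart,
      k + 1 ≤ (S.filter fun d' => d'.fst = d.fst).card ∨
      (k ≤ (S.filter fun d' => d'.fst = d.fst).card ∧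
        ∀ d' ∈ S, d'.fst = d.fst → d'.symm ∈ S) := by
    intro d
    by_cases hcase1 : d.fst.1 ∈ J
    · obtain ⟨i, hi⟩ := ha_surj d.fst
        (by rw [hAdef, Finset.mem_filter]; exact ⟨Finset.mem_univ _, hcase1⟩)
      right
      refine ⟨?_, ?_⟩
      · have h3 := hfibA i
        rw [hi] at h3
        exact h3.ge
      · intro d' hd' hfst
        rw [hSmem] at hd'
        show d'.symm ∈ S
        rw [hSmem]
        show R d'.snd d'.fst
        rw [← hi] at hfst
        rcases hd' with ⟨i2, j2, e1, e2, e3⟩ | ⟨i2, j2, e1, e2, e3⟩ | ⟨e1, e2, e3⟩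
        · exact Or.inr (Or.inl ⟨i2, j2, e2, e1, e3⟩)
        · exact absurd (hfst.symm.trans e1) (hab i j2)
        · have h4 := haJ i
          rw [hfst] at e1
          exact absurd h4 e1
    · by_cases hcase2 : ∃ j, d.fst = b j
      · obtain ⟨j, hj⟩ := hcase2
        right
        refine ⟨?_, ?_⟩
        · have h3 := hfibB j
          rw [← hj] at h3
          exact h3.ge
        · intro d' hd' hfst
          rw [hSmem] at hd'
          show d'.symm ∈ S
          rw [hSmem]
          show R d'.snd d'.fst
          rw [hj] at hfst
          rcases hd' with ⟨i2, j2, e1, e2, e3⟩ | ⟨i2, j2, e1, e2, e3⟩ | ⟨e1, e2, e3⟩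
          · exact absurd (e1.symm.trans hfst) (hab i2 j)
          · exact Or.inl ⟨i2, j2, e2, e1, e3⟩
          · exact absurd hfst (e2 j)
      · left
        push_neg at hcase2
        have h3 := hfibC d.fst hcase1 hcase2
        exact h3.ge
  -- the cardinality of S
  have hScard : S.card + 2 * n' = n * (k + 1) := by
    have hsum : S.card = ∑ x : ((i : Fin m) × Fin (ns i)), fib x :=
      Finset.card_eq_sum_card_fiberwise (fun d _ => Finset.mem_univ d.fst)
    set P : Finset ((i : Fin m) × Fin (ns i)) := A ∪ Finset.image b Finset.univ with hPdef
    have hdisj : Disjoint A (Finset.image b Finset.univ) := by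
      rw [Finset.disjoint_left]
      intro x hxA hxb
      rw [Finset.mem_image] at hxb
      obtain ⟨j, -, hj⟩ := hxb
      rw [hAdef, Finset.mem_filter] at hxA
      exact absurd hxA.2 (hj ▸ hbJ j)
    have hPcard : P.card = 2 * n' := by
      rw [hPdef, Finset.card_union_of_disjoint hdisj, hAcard,
        Finset.card_image_of_injective _ hb_inj, Finset.card_univ, ZMod.card]
      ring
    have hPfib : ∀ x ∈ P, fib x = k := by
      intro x hx
      rw [hPdef, Finset.mem_union] at hx
      rcases hx with hx | hx
      · obtain ⟨i, hi⟩ := ha_surj x hx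
        rw [← hi]; exact hfibA i
      · rw [Finset.mem_image] at hx
        obtain ⟨j, -, hj⟩ := hx
        rw [← hj]; exact hfibB j
    have hPcfib : ∀ x ∈ Pᶜ, fib x = k + 1 := by
      intro x hx
      rw [Finset.mem_compl, hPdef, Finset.mem_union] at hx
      push_neg at hx
      obtain ⟨hx1, hx2⟩ := hx
      have hx1' : x.1 ∉ J := by
        intro hmem
        exact hx1 (by rw [hAdef, Finset.mem_filter]; exact ⟨Finset.mem_univ _, hmem⟩)
      have hx2' : ∀ j, x ≠ b j := by
        intro j hj
        exact hx2 (Finset.mem_image.2 ⟨j, Finset.mem_univ _, hj.symm⟩)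
      exact hfibC x hx1' hx2'
    have hsplit := Finset.sum_add_sum_compl P fib
    have hsP : ∑ x ∈ P, fib x = P.card * k := Finset.sum_const_nat hPfib
    have hsPc : ∑ x ∈ Pᶜ, fib x = Pᶜ.card * (k + 1) := Finset.sum_const_nat hPcfib
    have hcards : P.card + Pᶜ.card = n := by
      rw [Finset.card_add_card_compl]; exact hcardV
    have hc2 : Pᶜ.card = n - 2 * n' := by omega
    rw [hsum, ← hsplit, hsP, hsPc, hPcard, hc2]
    have hrw : n = 2 * n' + (n - 2 * n') := by omega
    calc 2 * n' * k + (n - 2 * n') * (k + 1) + 2 * n'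
        = (2 * n' + (n - 2 * n')) * (k + 1) := by ring
      _ = n * (k + 1) := by rw [← hrw]
  -- conclusion
  have hKTDS := aux_inflation_ktds CG k S hcond
  have hle : ktdn (inflation CG) k ≤ S.card :=
    Nat.sInf_le ⟨↑S, hKTDS, Set.ncard_coe_finset S⟩
  calc ktdn (inflation CG) k ≤ S.card := hle
    _ ≤ n * (k + 1) - 2 * n' := by omega
end
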